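/- arXiv:2012.04106 — 3 statements merged into one kernel-verified Lean document; each statement's English description precedes it below -/
import Mathlib

section
/- An element z of the Nichols Hopf algebra H_{2^n} is a partial coaction of H_{2^n} on k if and only if z = 1 (the global coaction) or z = z_α = (1+g)/2 − Σ_{i=1}^{n−1} α_i·g x_i for some α = (α_1, …, α_{n−1}) ∈ k^{n−1}. Moreover, all these partial coactions are symmetric. (Theorem 4.2.2) -/
open scoped TensorProduct

/-- The linear map `h ↦ Σ λ(h₁) h₂` (Sweedler notation). -/
noncomputable def lCont (k H : Type*) [CommSemiring k] [Semiring H] [Bialgebra k H]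
    (lam : H →ₗ[k] k) : H →ₗ[k] H :=
  (TensorProduct.lid k H).toLinearMap ∘ₗ TensorProduct.map lam LinearMap.id ∘ₗ Coalgebra.comul

/-- The linear map `h ↦ Σ h₁ λ(h₂)` (Sweedler notation). -/
noncomputable def rCont (k H : Type*) [CommSemiring k] [Semiring H] [Bialgebra k H]
    (lam : H →ₗ[k] k) : H →ₗ[k] H :=
  (TensorProduct.rid k H).toLinearMap ∘ₗ TensorProduct.map LinearMap.id lam ∘ₗ Coalgebra.comul

/-- A partial action of a bialgebra `H` on its base field `k`: a linear map `λ : H → k` with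
`λ(1) = 1` and `λ(h)λ(y) = Σ λ(h₁)λ(h₂y)` for all `h, y ∈ H`; by linearity the right-hand side
is `λ((Σ λ(h₁) h₂) · y)`. -/
def IsPartialAction (k H : Type*) [CommSemiring k] [Semiring H] [Bialgebra k H]
    (lam : H →ₗ[k] k) : Prop :=
  lam 1 = 1 ∧ ∀ h y : H, lam h * lam y = lam (lCont k H lam h * y)

/-- A symmetric partial action additionally satisfies `λ(h)λ(y) = Σ λ(h₁y)λ(h₂)`, i.e.
`λ(h)λ(y) = λ((Σ h₁ λ(h₂)) · y)`. -/
def IsSymmPartialAction (k H : Type*) [CommSemiring k] [Semiring H] [Bialgebra k H]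
    (lam : H →ₗ[k] k) : Prop :=
  IsPartialAction k H lam ∧ ∀ h y : H, lam h * lam y = lam (rCont k H lam h * y)

/-- A realization of the Nichols Hopf algebra `H_{2^n}`: a Hopf algebra `H` over `k` (with
`char k ≠ 2`) generated by `g, x_1, …, x_{n−1}` with `g² = 1`, `x_i² = 0`, `x_i g = −g x_i`,
`x_i x_j = −x_j x_i`, such that the products `g^{j₀} x_1^{j₁} ⋯ x_{n−1}^{j_{n−1}}`
(`j_t ∈ {0,1}`) form a `k`-basis, `g` is group-like and each `x_i` is `(1,g)`-primitive. -/
structure NicholsData (k : Type*) [Field k] (n : ℕ) (H : Type*)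
    [Ring H] [HopfAlgebra k H] where
  g : H
  x : Fin (n - 1) → H
  g_sq : g ^ 2 = 1
  x_sq : ∀ i, x i ^ 2 = 0
  x_mul_g : ∀ i, x i * g = -(g * x i)
  x_mul_x : ∀ i j, x i * x j = -(x j * x i)
  basis : Module.Basis (Fin 2 × (Fin (n - 1) → Fin 2)) k H
  basis_eq : ∀ p : Fin 2 × (Fin (n - 1) → Fin 2),
    basis p = g ^ (p.1 : ℕ) *
      ((List.finRange (n - 1)).map (fun i => x i ^ ((p.2 i : ℕ)))).prod
  comul_g : Coalgebra.comul (R := k) g = g ⊗ₜ[k] g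
  comul_x : ∀ i, Coalgebra.comul (R := k) (x i) = x i ⊗ₜ[k] (1 : H) + g ⊗ₜ[k] x i
  counit_g : Coalgebra.counit (R := k) g = 1
  counit_x : ∀ i, Coalgebra.counit (R := k) (x i) = 0

/-- An element `z` of a bialgebra `H` over `k` is a partial coaction of `H` on `k` if
`ε(z) = 1` and `z⊗z = (z⊗1)Δ(z)` in `H ⊗ H`. -/
def IsPartialCoaction (k H : Type*) [CommSemiring k] [Semiring H] [Bialgebra k H]
    (z : H) : Prop :=
  Coalgebra.counit (R := k) z = 1 ∧
    z ⊗ₜ[k] z = (z ⊗ₜ[k] (1 : H)) * Coalgebra.comul (R := k) z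

/-- A partial coaction `z` is symmetric if moreover `z⊗z = Δ(z)(z⊗1)`. -/
def IsSymmPartialCoaction (k H : Type*) [CommSemiring k] [Semiring H] [Bialgebra k H]
    (z : H) : Prop :=
  IsPartialCoaction k H z ∧
    z ⊗ₜ[k] z = Coalgebra.comul (R := k) z * (z ⊗ₜ[k] (1 : H))

section Infra
variable {k H : Type*} [Field k] [Ring H] [HopfAlgebra k H] {n : ℕ}

lemma fin2cases (s : Fin 2) : s = 0 ∨ s = 1 := by omega

/-- decomposition of `finRange` at `i` -/
lemma finRange_split {m : ℕ} (i : Fin m) :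
    ∃ l₁ l₂ : List (Fin m), List.finRange m = l₁ ++ i :: l₂ ∧ i ∉ l₁ ∧ i ∉ l₂ := by
  have hi : i ∈ List.finRange m := List.mem_finRange i
  rcases List.append_of_mem hi with ⟨l₁, l₂, he⟩
  have hnd : (l₁ ++ i :: l₂).Nodup := he ▸ List.nodup_finRange m
  rw [List.nodup_append] at hnd
  refine ⟨l₁, l₂, he, fun h => hnd.2.2 i h i List.mem_cons_self rfl, (List.nodup_cons.mp hnd.2.1).1⟩

namespace NicholsData
variable (N : NicholsData k n H)

/-- the factor `x_a ^ (S a)` -/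
noncomputable def fS (S : Fin (n-1) → Fin 2) (a : Fin (n-1)) : H := N.x a ^ (S a : ℕ)

/-- the basis monomial in the `x`'s -/
noncomputable def mon (S : Fin (n-1) → Fin 2) : H :=
  ((List.finRange (n-1)).map (N.fS S)).prod

lemma B_eq (p : Fin 2 × (Fin (n-1) → Fin 2)) :
    N.basis p = N.g ^ (p.1 : ℕ) * N.mon p.2 := N.basis_eq p

/-- indicator function -/
def ei (i : Fin (n-1)) : Fin (n-1) → Fin 2 := fun a => if a = i then 1 else 0

lemma ei_self (i : Fin (n-1)) : ei i i = 1 := by simp [ei]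
lemma ei_ne (i a : Fin (n-1)) (h : a ≠ i) : ei i a = 0 := by simp [ei, h]
lemma ei_ne_zero (i : Fin (n-1)) : ei i ≠ 0 := by
  intro h
  have := congrFun h i
  simp [ei] at this

lemma ei_inj : Function.Injective (ei (n := n)) := by
  intro i j h
  have := congrFun h i
  by_contra hne
  rw [ei, ei, if_pos rfl, if_neg hne] at this
  exact absurd this (by decide)

lemma fS_zero (S : Fin (n-1) → Fin 2) (a : Fin (n-1)) (h : S a = 0) : N.fS S a = 1 := by
  simp [fS, h]
lemma fS_one (S : Fin (n-1) → Fin 2) (a : Fin (n-1)) (h : S a = 1) : N.fS S a = N.x a := by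
  simp [fS, h]

lemma prod_eq_one_of (l : List (Fin (n-1))) (S : Fin (n-1) → Fin 2)
    (h : ∀ a ∈ l, S a = 0) : ((l.map (N.fS S)).prod : H) = 1 := by
  apply List.prod_eq_one
  intro y hy
  rcases List.mem_map.mp hy with ⟨a, ha, rfl⟩
  exact N.fS_zero S a (h a ha)

lemma mon_zero : N.mon (0 : Fin (n-1) → Fin 2) = 1 :=
  N.prod_eq_one_of _ _ (fun _ _ => rfl)

lemma g_mul_g : N.g * N.g = 1 := by
  have := N.g_sq; rwa [pow_two] at this

lemma x_mul_x_self (i : Fin (n-1)) : N.x i * N.x i = 0 := by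
  have := N.x_sq i; rwa [pow_two] at this

lemma mon_ei (i : Fin (n-1)) : N.mon (ei i) = N.x i := by
  rcases finRange_split i with ⟨l₁, l₂, he, h1, h2⟩
  rw [mon, he, List.map_append, List.prod_append, List.map_cons, List.prod_cons]
  rw [N.prod_eq_one_of l₁ _ (fun a ha => ei_ne i a (fun hc => h1 (hc ▸ ha)))]
  rw [N.prod_eq_one_of l₂ _ (fun a ha => ei_ne i a (fun hc => h2 (hc ▸ ha)))]
  rw [N.fS_one _ i (ei_self i), one_mul, mul_one]

/-- commuting a factor past `g` -/
lemma fS_mul_g (S : Fin (n-1) → Fin 2) (a : Fin (n-1)) :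
    N.fS S a * N.g = ((-1 : k) ^ (S a : ℕ)) • (N.g * N.fS S a) := by
  rcases fin2cases (S a) with h | h <;> rw [h]
  · simp [fS, h]
  · simpa [fS, h] using N.x_mul_g a

lemma x_mul_gpow (a : Fin (n-1)) (j : Fin 2) :
    N.x a * N.g ^ (j : ℕ) = ((-1 : k) ^ (j : ℕ)) • (N.g ^ (j : ℕ) * N.x a) := by
  rcases fin2cases j with h | h <;> rw [h] <;> simp [N.x_mul_g a]

/-- list version of `mon S * g` commutation -/
lemma prod_mul_g (S : Fin (n-1) → Fin 2) :
    ∀ l : List (Fin (n-1)), ((l.map (N.fS S)).prod : H) * N.g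
      = ((-1 : k) ^ ((l.map fun a => (S a : ℕ)).sum)) • (N.g * (l.map (N.fS S)).prod)
  | [] => by simp
  | a :: l => by
      rw [List.map_cons, List.prod_cons, mul_assoc, prod_mul_g S l, List.map_cons]
      rw [mul_smul_comm, ← mul_assoc, N.fS_mul_g S a, smul_mul_assoc, smul_smul, mul_assoc,
        List.sum_cons, pow_add, mul_comm ((-1:k) ^ (S a : ℕ))]

lemma mon_mul_g (S : Fin (n-1) → Fin 2) :
    N.mon S * N.g = ((-1 : k) ^ (((List.finRange (n-1)).map fun a => (S a : ℕ)).sum)) •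
      (N.g * N.mon S) := N.prod_mul_g S _

/-- commuting `x a` past a factor -/
lemma x_mul_fS (S : Fin (n-1) → Fin 2) (a b : Fin (n-1)) (hab : a ≠ b) :
    N.x a * N.fS S b = ((-1 : k) ^ (S b : ℕ)) • (N.fS S b * N.x a) := by
  rcases fin2cases (S b) with h | h <;> rw [h]
  · simp [fS, h]
  · simp only [fS, h, Fin.val_one, pow_one]
    rw [N.x_mul_x a b]
    simp

/-- left multiplication by `x a` kills a monomial containing `x a` -/
lemma x_mul_prod_of_mem (S : Fin (n-1) → Fin 2) (a : Fin (n-1)) (hS : S a = 1) :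
    ∀ l : List (Fin (n-1)), a ∈ l → N.x a * ((l.map (N.fS S)).prod : H) = 0
  | b :: l, hmem => by
      rw [List.map_cons, List.prod_cons]
      by_cases hab : a = b
      · subst hab
        rw [← mul_assoc, N.fS_one S a hS, N.x_mul_x_self a, zero_mul]
      · have hal : a ∈ l := by
          rcases List.mem_cons.mp hmem with h | h
          · exact absurd h hab
          · exact h
        rw [← mul_assoc, N.x_mul_fS S a b hab, smul_mul_assoc, mul_assoc,
          x_mul_prod_of_mem S a hS l hal, mul_zero, smul_zero]

lemma x_mul_mon_of_one (S : Fin (n-1) → Fin 2) (a : Fin (n-1)) (hS : S a = 1) :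
    N.x a * N.mon S = 0 :=
  N.x_mul_prod_of_mem S a hS _ (List.mem_finRange a)

/-- left multiplication by `x a` on a monomial not containing it -/
lemma x_mul_prod_of_not (S : Fin (n-1) → Fin 2) (a : Fin (n-1)) (hS : S a = 0) :
    ∀ l : List (Fin (n-1)), l.Nodup → a ∈ l →
      ∃ d : k, d ≠ 0 ∧ N.x a * ((l.map (N.fS S)).prod : H)
        = d • ((l.map (N.fS (Function.update S a 1))).prod : H)
  | b :: l, hnd, hmem => by
      have hnd' := List.nodup_cons.mp hnd
      by_cases hab : a = b
      · subst hab
        refine ⟨1, one_ne_zero, ?_⟩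
        rw [List.map_cons, List.prod_cons, List.map_cons, List.prod_cons]
        rw [N.fS_zero S a hS, one_mul, one_smul]
        have h1 : N.fS (Function.update S a 1) a = N.x a := by
          simp [fS]
        rw [h1]
        congr 2
        exact List.map_congr_left (fun c hc => by
          have hca : c ≠ a := fun hca => hnd'.1 (hca ▸ hc)
          simp [fS, Function.update_of_ne hca])
      · have hal : a ∈ l := by
          rcases List.mem_cons.mp hmem with h | h
          · exact absurd h hab
          · exact h
        rcases x_mul_prod_of_not S a hS l hnd'.2 hal with ⟨d, hd, heq⟩
        refine ⟨(-1 : k) ^ (S b : ℕ) * d, by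
          apply mul_ne_zero _ hd
          rcases fin2cases (S b) with h | h <;> rw [h] <;> norm_num, ?_⟩
        rw [List.map_cons, List.prod_cons, ← mul_assoc, N.x_mul_fS S a b hab,
          smul_mul_assoc, mul_assoc, heq, List.map_cons, List.prod_cons]
        have : N.fS (Function.update S a 1) b = N.fS S b := by
          simp [fS, Function.update_of_ne (Ne.symm hab)]
        rw [this, mul_smul_comm, smul_smul]

lemma x_mul_mon_of_zero (S : Fin (n-1) → Fin 2) (a : Fin (n-1)) (hS : S a = 0) :
    ∃ d : k, d ≠ 0 ∧ N.x a * N.mon S = d • N.mon (Function.update S a 1) :=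
  N.x_mul_prod_of_not S a hS _ (List.nodup_finRange _) (List.mem_finRange a)

end NicholsData
end Infra
section Infra2
variable {k H : Type*} [Field k] [Ring H] [HopfAlgebra k H] {n : ℕ}

namespace NicholsData
variable (N : NicholsData k n H)

/-- weight of an exponent vector -/
def wt (S : Fin (n-1) → Fin 2) : ℕ := ∑ a, (S a : ℕ)

/-- pointwise "or" -/
def orf (S T : Fin (n-1) → Fin 2) : Fin (n-1) → Fin 2 :=
  fun a => if S a = 1 ∨ T a = 1 then 1 else 0

lemma exists_one {S : Fin (n-1) → Fin 2} (h : S ≠ 0) : ∃ i, S i = 1 := by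
  by_contra hc
  push_neg at hc
  exact h (funext fun a => by rcases fin2cases (S a) with h0 | h1
                              · exact h0
                              · exact absurd h1 (hc a))

lemma wt_le (S : Fin (n-1) → Fin 2) : wt S ≤ n - 1 := by
  unfold wt
  calc ∑ a, ((S a : ℕ)) ≤ ∑ _a : Fin (n-1), 1 :=
        Finset.sum_le_sum (fun a _ => by omega)
    _ = n - 1 := by simp

lemma wt_update_lt (S : Fin (n-1) → Fin 2) (i : Fin (n-1)) (h : S i = 1) :
    wt (Function.update S i 0) + 1 = wt S := by
  unfold wt
  rw [Finset.sum_eq_sum_sdiff_singleton_add (Finset.mem_univ i)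
    (fun a => ((Function.update S i 0 a : ℕ)))]
  rw [Finset.sum_eq_sum_sdiff_singleton_add (Finset.mem_univ i) (fun a => ((S a : ℕ)))]
  have h1 : ∑ a ∈ Finset.univ \ {i}, ((Function.update S i 0 a : ℕ))
      = ∑ a ∈ Finset.univ \ {i}, ((S a : ℕ)) :=
    Finset.sum_congr rfl (fun a ha => by
      have hai : a ≠ i := by simpa using (Finset.mem_sdiff.mp ha).2
      simp [Function.update_of_ne hai])
  rw [h1, h]
  simp

lemma update_update {S : Fin (n-1) → Fin 2} {i : Fin (n-1)} (h : S i = 1) :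
    Function.update (Function.update S i 0) i 1 = S := by
  funext a
  by_cases ha : a = i
  · subst ha; simp [h]
  · simp [Function.update_of_ne ha]

lemma orf_zero (T : Fin (n-1) → Fin 2) : orf (0 : Fin (n-1) → Fin 2) T = T := by
  funext a
  rcases fin2cases (T a) with h | h <;>
    simp [orf, h, show ¬((0:Fin 2) = 1) by decide]

lemma orf_update_self {S T : Fin (n-1) → Fin 2} {i : Fin (n-1)} (hS : S i = 1) (hT : T i = 0) :
    Function.update (orf (Function.update S i 0) T) i 1 = orf S T := by
  funext a
  by_cases ha : a = i
  · subst ha; simp [orf, hS]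
  · simp [Function.update_of_ne ha, orf]

lemma orf_update_apply {S T : Fin (n-1) → Fin 2} {i : Fin (n-1)} (hT : T i = 0) :
    orf (Function.update S i 0) T i = 0 := by
  simp [orf, hT, show ¬((0:Fin 2) = 1) by decide]

lemma orf_update_apply' {S T : Fin (n-1) → Fin 2} {i : Fin (n-1)} (hT : T i = 1) :
    orf (Function.update S i 0) T i = 1 := by
  simp [orf, hT]

/-- master product lemma for `x`-monomials -/
lemma mon_mul_mon_aux : ∀ (w : ℕ) (S T : Fin (n-1) → Fin 2), wt S ≤ w →
    ∃ d : k, N.mon S * N.mon T = d • N.mon (orf S T) ∧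
      (d ≠ 0 ↔ ∀ i, S i = 0 ∨ T i = 0) := by
  intro w
  induction w with
  | zero =>
      intro S T hw
      have hS : S = 0 := by
        funext a
        have h0 : (S a : ℕ) = 0 :=
          Finset.sum_eq_zero_iff.mp (Nat.le_zero.mp hw) a (Finset.mem_univ a)
        exact Fin.ext (by simpa using h0)
      subst hS
      refine ⟨1, by rw [N.mon_zero, one_mul, one_smul, orf_zero], ?_⟩
      simp
  | succ w ih =>
      intro S T hw
      by_cases hS : S = 0
      · subst hS
        refine ⟨1, by rw [N.mon_zero, one_mul, one_smul, orf_zero], by simp⟩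
      · rcases exists_one hS with ⟨i, hi⟩
        have hSmi : Function.update S i 0 i = 0 := by simp
        rcases N.x_mul_mon_of_zero (Function.update S i 0) i hSmi with ⟨d₀, hd₀, heq₀⟩
        rw [update_update hi] at heq₀
        have hmonS : N.mon S = d₀⁻¹ • (N.x i * N.mon (Function.update S i 0)) := by
          rw [heq₀, smul_smul, inv_mul_cancel₀ hd₀, one_smul]
        have hwSm : wt (Function.update S i 0) ≤ w := by
          have := wt_update_lt S i hi
          omega
        rcases ih (Function.update S i 0) T hwSm with ⟨d₁, heq₁, hiff₁⟩
        have key : N.mon S * N.mon T = (d₀⁻¹ * d₁) • (N.x i * N.mon (orf (Function.update S i 0) T)) := by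
          rw [hmonS, smul_mul_assoc, mul_assoc, heq₁, mul_smul_comm, smul_smul]
        rcases fin2cases (T i) with hTi | hTi
        · -- T i = 0
          rcases N.x_mul_mon_of_zero (orf (Function.update S i 0) T) i (orf_update_apply hTi) with ⟨d₂, hd₂, heq₂⟩
          rw [orf_update_self hi hTi] at heq₂
          refine ⟨d₀⁻¹ * d₁ * d₂, by rw [key, heq₂, smul_smul, mul_assoc], ?_⟩
          constructor
          · intro hne a
            have hd₁ : d₁ ≠ 0 := by
              intro hz; rw [hz] at hne; simp at hne
            have := (hiff₁.mp hd₁) a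
            by_cases ha : a = i
            · subst ha; right; exact hTi
            · rcases this with h | h
              · left; rwa [Function.update_of_ne ha] at h
              · right; exact h
          · intro hdisj
            have hd₁ : d₁ ≠ 0 := hiff₁.mpr (fun a => by
              by_cases ha : a = i
              · subst ha; left; exact hSmi
              · rcases hdisj a with h | h
                · left; rwa [Function.update_of_ne ha]
                · right; exact h)
            exact mul_ne_zero (mul_ne_zero (inv_ne_zero hd₀) hd₁) hd₂
        · -- T i = 1 : overlap
          have : N.x i * N.mon (orf (Function.update S i 0) T) = 0 :=
            N.x_mul_mon_of_one _ i (orf_update_apply' hTi)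
          refine ⟨0, by rw [key, this, smul_zero, zero_smul], ?_⟩
          constructor
          · intro hne; exact absurd rfl hne
          · intro hdisj
            rcases hdisj i with h | h
            · rw [hi] at h; exact absurd h (by decide)
            · rw [hTi] at h; exact absurd h (by decide)

lemma mon_mul_mon (S T : Fin (n-1) → Fin 2) :
    ∃ d : k, N.mon S * N.mon T = d • N.mon (orf S T) ∧
      (d ≠ 0 ↔ ∀ i, S i = 0 ∨ T i = 0) :=
  N.mon_mul_mon_aux (wt S) S T le_rfl

lemma gpow_mul_gpow (j j' : Fin 2) :
    (N.g ^ (j : ℕ)) * N.g ^ (j' : ℕ) = N.g ^ (((j + j' : Fin 2)) : ℕ) := by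
  rcases fin2cases j with h | h <;> rcases fin2cases j' with h' | h' <;> subst h <;> subst h'
  · simp
  · simp
  · simp
  · rw [show ((1:Fin 2)+1) = 0 by decide]
    simp [N.g_mul_g]

lemma mon_mul_gpow (S : Fin (n-1) → Fin 2) (j : Fin 2) :
    ∃ e : k, e ≠ 0 ∧ N.mon S * N.g ^ (j : ℕ) = e • (N.g ^ (j : ℕ) * N.mon S) := by
  rcases fin2cases j with h | h <;> subst h
  · exact ⟨1, one_ne_zero, by simp⟩
  · refine ⟨(-1 : k) ^ ((List.finRange (n-1)).map fun a => ((S a : ℕ))).sum, ?_, by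
      simpa using N.mon_mul_g S⟩
    apply pow_ne_zero
    norm_num

/-- master product lemma for basis elements -/
lemma B_mul_B (p q : Fin 2 × (Fin (n-1) → Fin 2)) :
    ∃ d : k, N.basis p * N.basis q = d • N.basis (p.1 + q.1, orf p.2 q.2) ∧
      (d ≠ 0 ↔ ∀ i, p.2 i = 0 ∨ q.2 i = 0) := by
  obtain ⟨j, S⟩ := p
  obtain ⟨j', T⟩ := q
  rcases N.mon_mul_mon S T with ⟨d, hd, hiff⟩
  rcases N.mon_mul_gpow S j' with ⟨e, he, heq⟩
  refine ⟨e * d, ?_, by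
    constructor
    · intro hne; exact hiff.mp (fun hz => hne (by rw [hz, mul_zero]))
    · intro hdisj; exact mul_ne_zero he (hiff.mpr hdisj)⟩
  rw [N.B_eq, N.B_eq, N.B_eq]
  simp only
  calc N.g ^ (j : ℕ) * N.mon S * (N.g ^ (j' : ℕ) * N.mon T)
      = N.g ^ (j : ℕ) * ((N.mon S * N.g ^ (j' : ℕ)) * N.mon T) := by
        rw [mul_assoc, ← mul_assoc (N.mon S)]
    _ = e • (N.g ^ (j : ℕ) * (N.g ^ (j' : ℕ) * (N.mon S * N.mon T))) := by
        rw [heq, smul_mul_assoc, mul_smul_comm, mul_assoc]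
    _ = (e * d) • (N.g ^ (j : ℕ) * N.g ^ (j' : ℕ) * N.mon (orf S T)) := by
        rw [hd, mul_smul_comm, mul_smul_comm, smul_smul, ← mul_assoc]
    _ = (e * d) • (N.g ^ (((j + j' : Fin 2)) : ℕ) * N.mon (orf S T)) := by
        rw [N.gpow_mul_gpow]

end NicholsData
end Infra2
section Infra3
variable {k H : Type*} [Field k] [Ring H] [HopfAlgebra k H] {n : ℕ}

namespace NicholsData
variable (N : NicholsData k n H)

/-- slice of a tensor along a functional in the second leg -/
noncomputable def sliceF (φ : H →ₗ[k] k) : H ⊗[k] H →ₗ[k] H :=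
  (TensorProduct.rid k H).toLinearMap ∘ₗ LinearMap.lTensor H φ

lemma sliceF_tmul (φ : H →ₗ[k] k) (u v : H) :
    sliceF φ (u ⊗ₜ[k] v) = φ v • u := by
  simp [sliceF]

lemma sliceF_zero_map (t : H ⊗[k] H) : sliceF (0 : H →ₗ[k] k) t = 0 := by
  simp [sliceF]

lemma sliceF_smul_map (c : k) (φ : H →ₗ[k] k) (t : H ⊗[k] H) :
    sliceF (c • φ) t = c • sliceF φ t := by
  simp [sliceF, LinearMap.lTensor_smul]

lemma sliceF_mul (φ : H →ₗ[k] k) (u v : H) (t : H ⊗[k] H) :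
    sliceF φ ((u ⊗ₜ[k] v) * t) = u * sliceF (φ ∘ₗ LinearMap.mulLeft k v) t := by
  induction t with
  | zero => simp
  | tmul a b =>
      rw [Algebra.TensorProduct.tmul_mul_tmul, sliceF_tmul, sliceF_tmul]
      simp [mul_smul_comm]
  | add t₁ t₂ h₁ h₂ => rw [mul_add, map_add, map_add, h₁, h₂, mul_add]

lemma coordB (q p : Fin 2 × (Fin (n-1) → Fin 2)) :
    N.basis.coord q (N.basis p) = if p = q then 1 else 0 := by
  classical
  rw [Module.Basis.coord_apply, Module.Basis.repr_self, Finsupp.single_apply]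

lemma x_mul_B_one (a : Fin (n-1)) (p : Fin 2 × (Fin (n-1) → Fin 2)) (h : p.2 a = 1) :
    N.x a * N.basis p = 0 := by
  rw [N.B_eq, ← mul_assoc, N.x_mul_gpow, smul_mul_assoc, mul_assoc,
    N.x_mul_mon_of_one p.2 a h, mul_zero, smul_zero]

lemma update_zero_eq_ei (a : Fin (n-1)) :
    Function.update (0 : Fin (n-1) → Fin 2) a 1 = ei a := by
  funext c
  by_cases hc : c = a
  · subst hc; simp [ei_self]
  · simp [Function.update_of_ne hc, ei_ne a c hc]

lemma x_mul_B_zero (a : Fin (n-1)) (p : Fin 2 × (Fin (n-1) → Fin 2)) (h : p.2 a = 0) :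
    ∃ d : k, d ≠ 0 ∧ N.x a * N.basis p = d • N.basis (p.1, Function.update p.2 a 1) ∧
      (p.2 = 0 → d = (-1 : k) ^ (p.1 : ℕ)) := by
  by_cases h0 : p.2 = 0
  · refine ⟨(-1 : k) ^ (p.1 : ℕ), by
      rcases fin2cases p.1 with h1 | h1 <;> rw [h1] <;> norm_num, ?_, fun _ => rfl⟩
    rw [N.B_eq, h0, N.mon_zero, mul_one, N.x_mul_gpow, N.B_eq]
    simp only [h0, update_zero_eq_ei, N.mon_ei]
  · rcases N.x_mul_mon_of_zero p.2 a h with ⟨d', hd', heq'⟩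
    refine ⟨(-1 : k) ^ (p.1 : ℕ) * d', by
      apply mul_ne_zero _ hd'
      rcases fin2cases p.1 with h1 | h1 <;> rw [h1] <;> norm_num,
      ?_, fun hz => absurd hz h0⟩
    rw [N.B_eq, ← mul_assoc, N.x_mul_gpow, smul_mul_assoc, mul_assoc, heq',
      mul_smul_comm, smul_smul, N.B_eq]

lemma g_mul_B (p : Fin 2 × (Fin (n-1) → Fin 2)) :
    N.g * N.basis p = N.basis (p.1 + 1, p.2) := by
  rw [N.B_eq, N.B_eq]
  rcases fin2cases p.1 with h1 | h1 <;> rw [h1]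
  · rw [show ((0:Fin 2)+1) = 1 by decide]
    simp [← mul_assoc]
  · rw [show ((1:Fin 2)+1) = 0 by decide]
    simp [← mul_assoc, N.g_mul_g]

/-- A1 : `coord (j,0)` kills left multiples of `x a` -/
lemma coordA1 (j : Fin 2) (a : Fin (n-1)) :
    N.basis.coord (j, (0 : Fin (n-1) → Fin 2)) ∘ₗ LinearMap.mulLeft k (N.x a) = 0 := by
  apply N.basis.ext
  intro p
  simp only [LinearMap.comp_apply, LinearMap.mulLeft_apply, LinearMap.zero_apply]
  rcases fin2cases (p.2 a) with h | h
  · rcases N.x_mul_B_zero a p h with ⟨d, _, heq, _⟩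
    rw [heq, map_smul, coordB, smul_eq_mul]
    have : ¬((p.1, Function.update p.2 a 1) = (j, (0 : Fin (n-1) → Fin 2))) := by
      intro hc
      have := congrFun (congrArg Prod.snd hc) a
      simp at this
    rw [if_neg this, mul_zero]
  · rw [N.x_mul_B_one a p h, map_zero]

/-- A2 -/
lemma coordA2 (j : Fin 2) {a i : Fin (n-1)} (hai : a ≠ i) :
    N.basis.coord (j, ei i) ∘ₗ LinearMap.mulLeft k (N.x a) = 0 := by
  apply N.basis.ext
  intro p
  simp only [LinearMap.comp_apply, LinearMap.mulLeft_apply, LinearMap.zero_apply]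
  rcases fin2cases (p.2 a) with h | h
  · rcases N.x_mul_B_zero a p h with ⟨d, _, heq, _⟩
    rw [heq, map_smul, coordB, smul_eq_mul]
    have : ¬((p.1, Function.update p.2 a 1) = (j, ei i)) := by
      intro hc
      have h2 : Function.update p.2 a 1 = ei i := congrArg Prod.snd hc
      have h3 := congrFun h2 a
      rw [Function.update_self, ei_ne i a hai] at h3
      exact absurd h3 (by decide)
    rw [if_neg this, mul_zero]
  · rw [N.x_mul_B_one a p h, map_zero]

/-- A3 -/
lemma coordA3 (j : Fin 2) (i : Fin (n-1)) :
    N.basis.coord (j, ei i) ∘ₗ LinearMap.mulLeft k (N.x i)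
      = ((-1 : k) ^ (j : ℕ)) • N.basis.coord (j, (0 : Fin (n-1) → Fin 2)) := by
  apply N.basis.ext
  intro p
  simp only [LinearMap.comp_apply, LinearMap.mulLeft_apply, LinearMap.smul_apply]
  rcases fin2cases (p.2 i) with h | h
  · rcases N.x_mul_B_zero i p h with ⟨d, hd, heq, hex⟩
    rw [heq, map_smul, coordB, coordB, smul_eq_mul, smul_eq_mul]
    by_cases h0 : p.2 = 0
    · rw [hex h0]
      have hcond : ((p.1, Function.update p.2 i 1) = (j, ei i)) ↔ (p = (j, (0:Fin (n-1) → Fin 2))) := by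
        rw [Prod.ext_iff, Prod.ext_iff]
        exact and_congr Iff.rfl (iff_of_true (by rw [h0, update_zero_eq_ei]) h0)
      by_cases hc : p = (j, (0:Fin (n-1) → Fin 2))
      · rw [if_pos (hcond.mpr hc), if_pos hc, show p.1 = j from congrArg Prod.fst hc]
      · rw [if_neg (fun hx => hc (hcond.mp hx)), if_neg hc, mul_zero, mul_zero]
    · have hne1 : ¬((p.1, Function.update p.2 i 1) = (j, ei i)) := by
        intro hc
        apply h0
        have hsnd : Function.update p.2 i 1 = ei i := congrArg Prod.snd hc
        funext b
        by_cases hbi : b = i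
        · subst hbi; exact h
        · have hb := congrFun hsnd b
          rw [Function.update_of_ne hbi, ei_ne i b hbi] at hb
          exact hb
      have hne2 : ¬(p = (j, (0:Fin (n-1) → Fin 2))) := by
        intro hc; exact h0 (congrArg Prod.snd hc)
      rw [if_neg hne1, if_neg hne2, mul_zero, mul_zero]
  · rw [N.x_mul_B_one i p h, map_zero, coordB]
    have hne2 : ¬(p = (j, (0:Fin (n-1) → Fin 2))) := by
      intro hc
      have h2 : p.2 = (0 : Fin (n-1) → Fin 2) := congrArg Prod.snd hc
      have h3 := congrFun h2 i
      rw [h] at h3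
      have h4 : (1 : Fin 2) = 0 := h3
      exact absurd h4 (by decide)
    rw [if_neg hne2, smul_zero]

/-- A4 -/
lemma coordA4 (q : Fin 2 × (Fin (n-1) → Fin 2)) :
    N.basis.coord q ∘ₗ LinearMap.mulLeft k N.g = N.basis.coord (q.1 + 1, q.2) := by
  apply N.basis.ext
  intro p
  simp only [LinearMap.comp_apply, LinearMap.mulLeft_apply]
  rw [N.g_mul_B, coordB, coordB]
  have hff : ((p.1 + 1, p.2) = q) ↔ (p = (q.1 + 1, q.2)) := by
    rw [Prod.ext_iff, Prod.ext_iff]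
    have h1 : (p.1 + 1 = q.1) ↔ (p.1 = q.1 + 1) := by
      rcases fin2cases p.1 with hp | hp <;> rcases fin2cases q.1 with hq | hq <;>
        rw [hp, hq] <;> decide
    exact and_congr h1 Iff.rfl
  simp only [hff]

/-- the sliced comultiplication operator -/
noncomputable def sg (q : Fin 2 × (Fin (n-1) → Fin 2)) : H →ₗ[k] H :=
  sliceF (N.basis.coord q) ∘ₗ Coalgebra.comul

lemma sg_apply (q : Fin 2 × (Fin (n-1) → Fin 2)) (v : H) :
    N.sg q v = sliceF (N.basis.coord q) (Coalgebra.comul v) := rfl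

lemma sg_one (q : Fin 2 × (Fin (n-1) → Fin 2)) :
    N.sg q 1 = if q = ((0 : Fin 2), (0 : Fin (n-1) → Fin 2)) then (1 : H) else 0 := by
  rw [sg_apply, Bialgebra.comul_one, Algebra.TensorProduct.one_def, sliceF_tmul]
  have h1 : (1 : H) = N.basis (0, 0) := by
    rw [N.B_eq, N.mon_zero]; simp
  rw [h1, coordB]
  by_cases hc : ((0:Fin 2), (0 : Fin (n-1) → Fin 2)) = q
  · rw [if_pos hc, if_pos hc.symm, one_smul]
  · rw [if_neg hc, if_neg (fun h => hc h.symm), zero_smul]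

lemma sg_g_mul (j : Fin 2) (T : Fin (n-1) → Fin 2) (v : H) :
    N.sg (j, T) (N.g * v) = N.g * N.sg (j + 1, T) v := by
  rw [sg_apply, Bialgebra.comul_mul, N.comul_g, sliceF_mul, coordA4]
  rfl

lemma sg_x_mul_zero (j : Fin 2) (a : Fin (n-1)) (v : H) :
    N.sg (j, (0 : Fin (n-1) → Fin 2)) (N.x a * v)
      = N.x a * N.sg (j, (0:Fin (n-1) → Fin 2)) v := by
  rw [sg_apply, Bialgebra.comul_mul, N.comul_x, add_mul, map_add, sliceF_mul, sliceF_mul,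
    N.coordA1, sliceF_zero_map, mul_zero, add_zero]
  congr 1
  rw [sg_apply]
  congr 1
  rw [LinearMap.mulLeft_one, LinearMap.comp_id]

lemma sg_x_mul_ei_ne (j : Fin 2) {i a : Fin (n-1)} (hai : a ≠ i) (v : H) :
    N.sg (j, ei i) (N.x a * v) = N.x a * N.sg (j, ei i) v := by
  rw [sg_apply, Bialgebra.comul_mul, N.comul_x, add_mul, map_add, sliceF_mul, sliceF_mul,
    N.coordA2 j hai, sliceF_zero_map, mul_zero, add_zero]
  congr 1
  rw [sg_apply]
  congr 1
  rw [LinearMap.mulLeft_one, LinearMap.comp_id]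

lemma sg_x_mul_ei (j : Fin 2) (i : Fin (n-1)) (v : H) :
    N.sg (j, ei i) (N.x i * v)
      = N.x i * N.sg (j, ei i) v
        + ((-1 : k) ^ (j : ℕ)) • (N.g * N.sg (j, (0:Fin (n-1) → Fin 2)) v) := by
  rw [sg_apply, Bialgebra.comul_mul, N.comul_x, add_mul, map_add, sliceF_mul, sliceF_mul,
    N.coordA3, sliceF_smul_map, mul_smul_comm]
  congr 2
  · rw [sg_apply]
    congr 1
    rw [LinearMap.mulLeft_one, LinearMap.comp_id]

end NicholsData
end Infra3
section Infra4
variable {k H : Type*} [Field k] [Ring H] [HopfAlgebra k H] {n : ℕ}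

namespace NicholsData
variable (N : NicholsData k n H)

lemma sg_prod_zero (S : Fin (n-1) → Fin 2) (j : Fin 2) :
    ∀ l : List (Fin (n-1)),
      N.sg (j, (0 : Fin (n-1) → Fin 2)) ((l.map (N.fS S)).prod)
        = if j = 0 then ((l.map (N.fS S)).prod : H) else 0
  | [] => by
      rw [List.map_nil, List.prod_nil, sg_one]
      rcases fin2cases j with hj | hj <;> subst hj
      · rw [if_pos rfl, if_pos rfl]
      · rw [if_neg (by
          intro hc
          have h1 : (1 : Fin 2) = 0 := congrArg Prod.fst hc
          exact absurd h1 (by decide)), if_neg (by decide)]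
  | a :: l => by
      rw [List.map_cons, List.prod_cons]
      rcases fin2cases (S a) with h | h
      · rw [N.fS_zero S a h, one_mul, sg_prod_zero S j l]
      · rw [N.fS_one S a h, N.sg_x_mul_zero, sg_prod_zero S j l, mul_ite, mul_zero]

lemma sg_prod_ei_notmem (S : Fin (n-1) → Fin 2) (j : Fin 2) (i : Fin (n-1)) :
    ∀ l : List (Fin (n-1)), i ∉ l →
      N.sg (j, ei i) ((l.map (N.fS S)).prod) = 0
  | [], _ => by
      rw [List.map_nil, List.prod_nil, sg_one, if_neg]
      intro hc
      exact ei_ne_zero i (congrArg Prod.snd hc)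
  | a :: l, hmem => by
      have hai : a ≠ i := fun hc => hmem (hc ▸ List.mem_cons_self)
      have hil : i ∉ l := fun hc => hmem (List.mem_cons_of_mem a hc)
      rw [List.map_cons, List.prod_cons]
      rcases fin2cases (S a) with h | h
      · rw [N.fS_zero S a h, one_mul, sg_prod_ei_notmem S j i l hil]
      · rw [N.fS_one S a h, N.sg_x_mul_ei_ne j hai, sg_prod_ei_notmem S j i l hil, mul_zero]

lemma sg_prod_ei_split (S : Fin (n-1) → Fin 2) (j : Fin 2) (i : Fin (n-1)) :
    ∀ l₁ : List (Fin (n-1)), ∀ l₂ : List (Fin (n-1)), i ∉ l₁ → i ∉ l₂ →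
      N.sg (j, ei i) ((((l₁ ++ i :: l₂).map (N.fS S)).prod : H))
        = if S i = 1 ∧ j = 0
            then ((l₁.map (N.fS S)).prod : H) * (N.g * ((l₂.map (N.fS S)).prod : H))
            else 0
  | [], l₂, _, h2 => by
      rw [List.nil_append, List.map_cons, List.prod_cons]
      rcases fin2cases (S i) with h | h
      · rw [N.fS_zero S i h, one_mul, N.sg_prod_ei_notmem S j i l₂ h2, if_neg]
        rintro ⟨hc, -⟩
        rw [h] at hc
        exact absurd hc (by decide)
      · rw [N.fS_one S i h, N.sg_x_mul_ei, N.sg_prod_ei_notmem S j i l₂ h2, mul_zero, zero_add,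
          N.sg_prod_zero S j l₂]
        rcases fin2cases j with hj | hj <;> subst hj
        · rw [if_pos rfl, if_pos ⟨h, rfl⟩]
          simp
        · rw [if_neg (by decide), if_neg (by rintro ⟨-, hc⟩; exact absurd hc (by decide)),
            mul_zero, smul_zero]
  | a :: l₁, l₂, h1, h2 => by
      have hai : a ≠ i := fun hc => h1 (hc ▸ List.mem_cons_self)
      have hil : i ∉ l₁ := fun hc => h1 (List.mem_cons_of_mem a hc)
      rw [List.cons_append, List.map_cons, List.prod_cons]
      rcases fin2cases (S a) with h | h
      · rw [N.fS_zero S a h, one_mul, sg_prod_ei_split S j i l₁ l₂ hil h2, List.map_cons,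
          List.prod_cons, N.fS_zero S a h, one_mul]
      · rw [N.fS_one S a h, N.sg_x_mul_ei_ne j hai, sg_prod_ei_split S j i l₁ l₂ hil h2]
        by_cases hc : S i = 1 ∧ j = 0
        · rw [if_pos hc, if_pos hc, List.map_cons, List.prod_cons, N.fS_one S a h, mul_assoc]
        · rw [if_neg hc, if_neg hc, mul_zero]

/-- value of the `(j',0)` slice on basis elements -/
lemma sg_B_zero (j' : Fin 2) (p : Fin 2 × (Fin (n-1) → Fin 2)) :
    N.sg (j', (0 : Fin (n-1) → Fin 2)) (N.basis p)
      = if p.1 = j' then N.basis p else 0 := by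
  obtain ⟨j, S⟩ := p
  have hB0 : N.basis ((0:Fin 2), S) = N.mon S := by
    rw [N.B_eq]; simp
  have hB1 : N.basis ((1:Fin 2), S) = N.g * N.mon S := by
    rw [N.B_eq]; simp
  rcases fin2cases j with h | h <;> subst h <;> rcases fin2cases j' with h' | h' <;> subst h'
  · rw [if_pos rfl, hB0, mon, N.sg_prod_zero S 0, if_pos rfl]
  · rw [if_neg (fun hc => absurd (hc : (0:Fin 2) = 1) (by decide)), hB0, mon,
      N.sg_prod_zero S 1, if_neg (by decide)]
  · rw [if_neg (fun hc => absurd (hc : (1:Fin 2) = 0) (by decide)), hB1, N.sg_g_mul,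
      show ((0:Fin 2) + 1) = 1 by decide, mon,
      N.sg_prod_zero S 1, if_neg (by decide), mul_zero]
  · rw [if_pos rfl, hB1, N.sg_g_mul, show ((1:Fin 2) + 1) = 0 by decide, mon,
      N.sg_prod_zero S 0, if_pos rfl]

/-- value of the `(1, ei i)` slice on basis elements -/
lemma sg_B_ei (i : Fin (n-1)) (j : Fin 2) (S : Fin (n-1) → Fin 2) :
    ∃ d : k, d ≠ 0 ∧ (S = ei i → d = 1) ∧
      N.sg ((1 : Fin 2), ei i) (N.basis (j, S))
        = (if j = 1 ∧ S i = 1 then d else 0) • N.mon (Function.update S i 0) := by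
  rcases finRange_split i with ⟨l₁, l₂, hsplit, h1, h2⟩
  rcases fin2cases j with hj | hj <;> subst hj
  · refine ⟨1, one_ne_zero, fun _ => rfl, ?_⟩
    rw [N.B_eq]
    simp only
    rw [show ((0:Fin 2) : ℕ) = 0 from rfl, pow_zero, one_mul, mon, hsplit,
      N.sg_prod_ei_split S 1 i l₁ l₂ h1 h2,
      if_neg (by rintro ⟨-, hc⟩; exact absurd hc (by decide)),
      if_neg (by rintro ⟨hc, -⟩; exact absurd hc (by decide)), zero_smul]
  · -- j = 1
    rcases fin2cases (S i) with hSi | hSi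
    · refine ⟨1, one_ne_zero, fun hc => absurd (hc ▸ hSi) (by rw [ei_self]; decide), ?_⟩
      rw [N.B_eq]
      simp only
      rw [show ((1:Fin 2) : ℕ) = 1 from rfl, pow_one, mon, hsplit, N.sg_g_mul,
        show ((1:Fin 2) + 1) = 0 by decide,
        N.sg_prod_ei_split S 0 i l₁ l₂ h1 h2,
        if_neg (by rintro ⟨hc, -⟩; rw [hSi] at hc; exact absurd hc (by decide)), mul_zero,
        if_neg (by rintro ⟨-, hc⟩; rw [hSi] at hc; exact absurd hc (by decide)), zero_smul]
    · refine ⟨(-1 : k) ^ ((l₁.map fun a => ((S a : ℕ))).sum), by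
        apply pow_ne_zero; norm_num, ?_, ?_⟩
      · intro hSei
        have : (l₁.map fun a => ((S a : ℕ))).sum = 0 := by
          apply List.sum_eq_zero
          intro y hy
          rcases List.mem_map.mp hy with ⟨a, ha, rfl⟩
          have hai : a ≠ i := fun hc => h1 (hc ▸ ha)
          rw [hSei, ei_ne i a hai]
          rfl
        rw [this, pow_zero]
      · rw [N.B_eq]
        simp only
        rw [show ((1:Fin 2) : ℕ) = 1 from rfl, pow_one, mon, hsplit, N.sg_g_mul,
          show ((1:Fin 2) + 1) = 0 by decide,
          N.sg_prod_ei_split S 0 i l₁ l₂ h1 h2,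
          if_pos (show S i = 1 ∧ (0:Fin 2) = 0 from ⟨hSi, rfl⟩),
          if_pos (show True ∧ S i = 1 from ⟨trivial, hSi⟩)]
        -- goal : g * (P₁ * (g * P₂)) = e • mon (update S i 0)
        have hP1g : ((l₁.map (N.fS S)).prod : H) * N.g
            = ((-1 : k) ^ ((l₁.map fun a => ((S a : ℕ))).sum)) • (N.g * (l₁.map (N.fS S)).prod) :=
          N.prod_mul_g S l₁
        have hgP1 : N.g * (((l₁.map (N.fS S)).prod : H) * N.g)
            = ((-1 : k) ^ ((l₁.map fun a => ((S a : ℕ))).sum)) • (l₁.map (N.fS S)).prod := by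
          rw [hP1g, mul_smul_comm, ← mul_assoc, N.g_mul_g, one_mul]
        have hmon : N.mon (Function.update S i 0)
            = ((l₁.map (N.fS S)).prod : H) * (l₂.map (N.fS S)).prod := by
          rw [mon, hsplit, List.map_append, List.prod_append, List.map_cons, List.prod_cons]
          have hfi : N.fS (Function.update S i 0) i = 1 := by
            apply N.fS_zero
            simp
          rw [hfi, one_mul]
          have hl1 : l₁.map (N.fS (Function.update S i 0)) = l₁.map (N.fS S) :=
            List.map_congr_left (fun a ha => by
              have hai : a ≠ i := fun hc => h1 (hc ▸ ha)
              simp [fS, Function.update_of_ne hai])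
          have hl2 : l₂.map (N.fS (Function.update S i 0)) = l₂.map (N.fS S) :=
            List.map_congr_left (fun a ha => by
              have hai : a ≠ i := fun hc => h2 (hc ▸ ha)
              simp [fS, Function.update_of_ne hai])
          rw [hl1, hl2]
        rw [hmon, ← mul_assoc, ← mul_assoc, mul_assoc N.g _ N.g, hgP1, smul_mul_assoc]

/-- linear expansion of `sg` over the basis -/
lemma sg_expand (q : Fin 2 × (Fin (n-1) → Fin 2)) (z : H) :
    N.sg q z = ∑ p, N.basis.repr z p • N.sg q (N.basis p) := by
  conv_lhs => rw [← Module.Basis.sum_repr N.basis z]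
  rw [map_sum]
  simp only [map_smul]

end NicholsData
end Infra4
section Infra5
variable {k H : Type*} [Field k] [Ring H] [HopfAlgebra k H] {n : ℕ}

namespace NicholsData
variable (N : NicholsData k n H)

lemma wt_zero : wt (0 : Fin (n-1) → Fin 2) = 0 := by
  unfold wt
  simp

lemma wt_pos {S : Fin (n-1) → Fin 2} (h : S ≠ 0) : 1 ≤ wt S := by
  rcases exists_one h with ⟨i, hi⟩
  have h2 : (S i : ℕ) ≤ wt S := Finset.single_le_sum (f := fun a => ((S a : ℕ)))
    (fun a _ => Nat.zero_le _) (Finset.mem_univ i)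
  have h3 : (S i : ℕ) = 1 := by rw [hi]; rfl
  omega

lemma ne_zero_of_wt_pos {S : Fin (n-1) → Fin 2} (h : 1 ≤ wt S) : S ≠ 0 := by
  intro hc
  subst hc
  rw [wt_zero] at h
  omega

lemma wt_le_orf_right (S T : Fin (n-1) → Fin 2) : wt T ≤ wt (orf S T) := by
  apply Finset.sum_le_sum
  intro a _
  rcases fin2cases (T a) with h | h <;> rw [h]
  · exact Nat.zero_le _
  · have : orf S T a = 1 := by simp [orf, h]
    rw [this]

lemma wt_le_orf_left (S T : Fin (n-1) → Fin 2) : wt S ≤ wt (orf S T) := by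
  apply Finset.sum_le_sum
  intro a _
  rcases fin2cases (S a) with h | h <;> rw [h]
  · exact Nat.zero_le _
  · have : orf S T a = 1 := by simp [orf, h]
    rw [this]

lemma wt_orf_disjoint {S T : Fin (n-1) → Fin 2} (h : ∀ i, S i = 0 ∨ T i = 0) :
    wt (orf S T) = wt S + wt T := by
  unfold wt
  rw [← Finset.sum_add_distrib]
  apply Finset.sum_congr rfl
  intro a _
  rcases h a with h0 | h0 <;> rw [h0] <;> [rcases fin2cases (T a) with h1 | h1;
    rcases fin2cases (S a) with h1 | h1] <;> rw [h1] <;> simp [orf, h0, h1]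

/-- the two graded pieces -/
def Esub (j : Fin 2) : Submodule k H :=
  Submodule.span k {h | ∃ S, h = N.basis (j, S)}

/-- spans of basis elements of weight `≥ w` -/
def Wge (w : ℕ) : Submodule k H :=
  Submodule.span k {h | ∃ p : Fin 2 × (Fin (n-1) → Fin 2), w ≤ wt p.2 ∧ h = N.basis p}

/-- spans of `g`-free basis elements of weight `≥ w` -/
def Fsub (w : ℕ) : Submodule k H :=
  Submodule.span k {h | ∃ S, w ≤ wt S ∧ h = N.basis ((0 : Fin 2), S)}

lemma repr_eq_zero_of_Esub {j : Fin 2} {u : H} (hu : u ∈ N.Esub j)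
    {p : Fin 2 × (Fin (n-1) → Fin 2)} (hp : p.1 ≠ j) : N.basis.repr u p = 0 := by
  induction hu using Submodule.span_induction with
  | mem x hx =>
      rcases hx with ⟨S, rfl⟩
      rw [Module.Basis.repr_self, Finsupp.single_apply, if_neg]
      intro hc
      exact hp (by rw [← hc])
  | zero => simp
  | add x y hx hy ihx ihy => rw [map_add, Finsupp.add_apply, ihx, ihy, add_zero]
  | smul a x hx ihx => rw [map_smul, Finsupp.smul_apply, ihx, smul_zero]

lemma repr_eq_zero_of_Fsub {w : ℕ} {u : H} (hu : u ∈ N.Fsub w)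
    {p : Fin 2 × (Fin (n-1) → Fin 2)} (hp : wt p.2 < w ∨ p.1 ≠ 0) : N.basis.repr u p = 0 := by
  induction hu using Submodule.span_induction with
  | mem x hx =>
      rcases hx with ⟨S, hS, rfl⟩
      rw [Module.Basis.repr_self, Finsupp.single_apply, if_neg]
      intro hc
      rcases hp with h | h
      · rw [← hc] at h
        simp only at h
        omega
      · exact h (by rw [← hc])
  | zero => simp
  | add x y hx hy ihx ihy => rw [map_add, Finsupp.add_apply, ihx, ihy, add_zero]
  | smul a x hx ihx => rw [map_smul, Finsupp.smul_apply, ihx, smul_zero]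

lemma Esub_mul {j j' : Fin 2} {u v : H} (hu : u ∈ N.Esub j) (hv : v ∈ N.Esub j') :
    u * v ∈ N.Esub (j + j') := by
  induction hu using Submodule.span_induction with
  | mem x hx =>
      rcases hx with ⟨S, rfl⟩
      induction hv using Submodule.span_induction with
      | mem y hy =>
          rcases hy with ⟨T, rfl⟩
          rcases N.B_mul_B (j, S) (j', T) with ⟨d, hd, -⟩
          rw [hd]
          exact Submodule.smul_mem _ _ (Submodule.subset_span ⟨_, rfl⟩)
      | zero => rw [mul_zero]; exact Submodule.zero_mem _
      | add y₁ y₂ hy₁ hy₂ ih₁ ih₂ => rw [mul_add]; exact Submodule.add_mem _ ih₁ ih₂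
      | smul a y hy ih => rw [mul_smul_comm]; exact Submodule.smul_mem _ _ ih
  | zero => rw [zero_mul]; exact Submodule.zero_mem _
  | add x₁ x₂ hx₁ hx₂ ih₁ ih₂ => rw [add_mul]; exact Submodule.add_mem _ ih₁ ih₂
  | smul a x hx ih => rw [smul_mul_assoc]; exact Submodule.smul_mem _ _ ih

lemma Fsub_mul {w w' : ℕ} {u v : H} (hu : u ∈ N.Fsub w) (hv : v ∈ N.Fsub w') :
    u * v ∈ N.Fsub (w + w') := by
  induction hu using Submodule.span_induction with
  | mem x hx =>
      rcases hx with ⟨S, hS, rfl⟩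
      induction hv using Submodule.span_induction with
      | mem y hy =>
          rcases hy with ⟨T, hT, rfl⟩
          rcases N.B_mul_B ((0:Fin 2), S) ((0:Fin 2), T) with ⟨d, hd, hiff⟩
          rw [hd]
          by_cases hdisj : ∀ i, S i = 0 ∨ T i = 0
          · apply Submodule.smul_mem
            apply Submodule.subset_span
            refine ⟨orf S T, ?_, by rw [show ((0:Fin 2) + 0) = 0 by decide]⟩
            rw [wt_orf_disjoint hdisj]
            omega
          · have hd0 : d = 0 := by
              by_contra hne
              exact hdisj (hiff.mp hne)
            rw [hd0, zero_smul]
            exact Submodule.zero_mem _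
      | zero => rw [mul_zero]; exact Submodule.zero_mem _
      | add y₁ y₂ hy₁ hy₂ ih₁ ih₂ => rw [mul_add]; exact Submodule.add_mem _ ih₁ ih₂
      | smul a y hy ih => rw [mul_smul_comm]; exact Submodule.smul_mem _ _ ih
  | zero => rw [zero_mul]; exact Submodule.zero_mem _
  | add x₁ x₂ hx₁ hx₂ ih₁ ih₂ => rw [add_mul]; exact Submodule.add_mem _ ih₁ ih₂
  | smul a x hx ih => rw [smul_mul_assoc]; exact Submodule.smul_mem _ _ ih

lemma Wge_mul_left {u : H} (hu : u ∈ N.Wge 1) (v : H) : v * u ∈ N.Wge 1 := by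
  induction hu using Submodule.span_induction with
  | mem x hx =>
      rcases hx with ⟨p, hp, rfl⟩
      rw [← Module.Basis.sum_repr N.basis v, Finset.sum_mul]
      apply Submodule.sum_mem
      intro q _
      rw [smul_mul_assoc]
      apply Submodule.smul_mem
      rcases N.B_mul_B q p with ⟨d, hd, -⟩
      rw [hd]
      apply Submodule.smul_mem
      apply Submodule.subset_span
      refine ⟨_, ?_, rfl⟩
      exact le_trans hp (wt_le_orf_right q.2 p.2)
  | zero => rw [mul_zero]; exact Submodule.zero_mem _
  | add x y hx hy ihx ihy => rw [mul_add]; exact Submodule.add_mem _ ihx ihy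
  | smul a x hx ihx => rw [mul_smul_comm]; exact Submodule.smul_mem _ _ ihx

lemma Wge_mul_right {u : H} (hu : u ∈ N.Wge 1) (v : H) : u * v ∈ N.Wge 1 := by
  induction hu using Submodule.span_induction with
  | mem x hx =>
      rcases hx with ⟨p, hp, rfl⟩
      rw [← Module.Basis.sum_repr N.basis v, Finset.mul_sum]
      apply Submodule.sum_mem
      intro q _
      rw [mul_smul_comm]
      apply Submodule.smul_mem
      rcases N.B_mul_B p q with ⟨d, hd, -⟩
      rw [hd]
      apply Submodule.smul_mem
      apply Submodule.subset_span
      refine ⟨_, ?_, rfl⟩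
      exact le_trans hp (wt_le_orf_left p.2 q.2)
  | zero => rw [zero_mul]; exact Submodule.zero_mem _
  | add x y hx hy ihx ihy => rw [add_mul]; exact Submodule.add_mem _ ihx ihy
  | smul a x hx ihx => rw [smul_mul_assoc]; exact Submodule.smul_mem _ _ ihx

lemma repr_eq_zero_of_Wge {u : H} (hu : u ∈ N.Wge 1)
    (p : Fin 2 × (Fin (n-1) → Fin 2)) (hp : p.2 = 0) : N.basis.repr u p = 0 := by
  induction hu using Submodule.span_induction with
  | mem x hx =>
      rcases hx with ⟨q, hq, rfl⟩
      rw [Module.Basis.repr_self, Finsupp.single_apply, if_neg]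
      intro hc
      have hq2 : q.2 = (0 : Fin (n-1) → Fin 2) := by rw [hc]; exact hp
      rw [hq2, wt_zero] at hq
      omega
  | zero => simp
  | add x y hx hy ihx ihy => rw [map_add, Finsupp.add_apply, ihx, ihy, add_zero]
  | smul a x hx ihx => rw [map_smul, Finsupp.smul_apply, ihx, smul_zero]

lemma Fsub_eq_zero {u : H} (hu : u ∈ N.Fsub (n - 1 + 1)) : u = 0 := by
  induction hu using Submodule.span_induction with
  | mem x hx =>
      rcases hx with ⟨S, hS, rfl⟩
      exact absurd hS (by have := wt_le S; omega)
  | zero => rfl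
  | add x y hx hy ihx ihy => rw [ihx, ihy, add_zero]
  | smul a x hx ihx => rw [ihx, smul_zero]

lemma Fsub_pow {u : H} (hu : u ∈ N.Fsub 1) : ∀ m : ℕ, u ^ (m + 1) ∈ N.Fsub (m + 1)
  | 0 => by rwa [pow_one]
  | m + 1 => by
      rw [pow_succ]
      exact N.Fsub_mul (Fsub_pow hu m) hu

lemma idem_eq_zero {u : H} (hu : u ∈ N.Fsub 1) (hidem : u * u = u) : u = 0 := by
  have hpow : ∀ m : ℕ, u ^ (m + 1) = u := by
    intro m
    induction m with
    | zero => rw [pow_one]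
    | succ m ih => rw [pow_succ, ih, hidem]
  rw [← hpow (n - 1)]
  exact N.Fsub_eq_zero (N.Fsub_pow hu (n - 1))

lemma B_eq' (j : Fin 2) (S : Fin (n-1) → Fin 2) :
    N.basis (j, S) = N.g ^ (j : ℕ) * N.mon S := N.basis_eq (j, S)

lemma B00 : N.basis ((0 : Fin 2), (0 : Fin (n-1) → Fin 2)) = 1 := by
  rw [N.B_eq', N.mon_zero, mul_one]
  simp

lemma B10 : N.basis ((1 : Fin 2), (0 : Fin (n-1) → Fin 2)) = N.g := by
  rw [N.B_eq', N.mon_zero, mul_one]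
  rw [show ((1:Fin 2) : ℕ) = 1 from rfl, pow_one]

/-- the nontrivial character -/
noncomputable def chi (h : H) : k := N.basis.repr h (0, 0) - N.basis.repr h (1, 0)

lemma chi_one : N.chi 1 = 1 := by
  unfold chi
  rw [← N.B00, Module.Basis.repr_self]
  rw [Finsupp.single_apply, Finsupp.single_apply, if_pos rfl, if_neg (fun hc =>
    absurd (show (0:Fin 2) = 1 from congrArg Prod.fst hc) (by decide))]
  norm_num

lemma chi_g : N.chi N.g = -1 := by
  unfold chi
  rw [← N.B10, Module.Basis.repr_self]
  rw [Finsupp.single_apply, Finsupp.single_apply, if_neg (fun hc =>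
    absurd (show (1:Fin 2) = 0 from congrArg Prod.fst hc) (by decide)), if_pos rfl]
  norm_num

lemma chi_W {u : H} (hu : u ∈ N.Wge 1) : N.chi u = 0 := by
  unfold chi
  rw [N.repr_eq_zero_of_Wge hu (0,0) rfl, N.repr_eq_zero_of_Wge hu (1,0) rfl, sub_zero]

lemma decomp_mem (w : H) :
    w - N.basis.repr w (0,0) • 1 - N.basis.repr w (1,0) • N.g ∈ N.Wge 1 := by
  have hmem : ((1:Fin 2), (0:Fin (n-1) → Fin 2)) ∈
      Finset.univ \ {((0:Fin 2), (0:Fin (n-1) → Fin 2))} := by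
    rw [Finset.mem_sdiff, Finset.mem_singleton]
    exact ⟨Finset.mem_univ _, fun hc =>
      absurd (show (1:Fin 2) = 0 from congrArg Prod.fst hc) (by decide)⟩
  have key : w - N.basis.repr w (0,0) • 1 - N.basis.repr w (1,0) • N.g
      = ∑ p ∈ (Finset.univ \ {((0:Fin 2), (0:Fin (n-1) → Fin 2))})
          \ {((1:Fin 2), (0:Fin (n-1) → Fin 2))}, N.basis.repr w p • N.basis p := by
    calc w - N.basis.repr w (0,0) • 1 - N.basis.repr w (1,0) • N.g
        = (∑ p, N.basis.repr w p • N.basis p)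
            - N.basis.repr w (0,0) • 1 - N.basis.repr w (1,0) • N.g := by
          rw [Module.Basis.sum_repr N.basis w]
      _ = _ := by
          rw [Finset.sum_eq_sum_sdiff_singleton_add
            (Finset.mem_univ ((0:Fin 2), (0:Fin (n-1) → Fin 2)))]
          rw [Finset.sum_eq_sum_sdiff_singleton_add hmem]
          rw [N.B00, N.B10]
          abel
  rw [key]
  apply Submodule.sum_mem
  intro p hp
  simp only [Finset.mem_sdiff, Finset.mem_univ, Finset.mem_singleton, true_and] at hp
  apply Submodule.smul_mem
  apply Submodule.subset_span
  refine ⟨p, ?_, rfl⟩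
  apply wt_pos
  intro hc
  rcases fin2cases p.1 with h | h
  · exact hp.1 (Prod.ext h hc)
  · exact hp.2 (Prod.ext h hc)

lemma chi_spec (c c' : k) (W : H) (hW : W ∈ N.Wge 1) :
    N.chi (c • 1 + c' • N.g + W) = c - c' := by
  unfold chi
  rw [map_add, map_add, map_smul, map_smul]
  simp only [Finsupp.add_apply, Finsupp.smul_apply]
  rw [N.repr_eq_zero_of_Wge hW (0,0) rfl, N.repr_eq_zero_of_Wge hW (1,0) rfl]
  rw [← N.B00, ← N.B10, Module.Basis.repr_self, Module.Basis.repr_self]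
  simp [Finsupp.single_apply, Prod.ext_iff, show ¬((0:Fin 2) = 1) by decide,
    show ¬((1:Fin 2) = 0) by decide]

lemma chi_mul_aux (a0 a1 b0 b1 : k) (wu wv : H)
    (hWu : wu ∈ N.Wge 1) (hWv : wv ∈ N.Wge 1) :
    N.chi ((a0 • 1 + a1 • N.g + wu) * (b0 • 1 + b1 • N.g + wv))
      = (a0 - a1) * (b0 - b1) := by
  have hexp : (a0 • 1 + a1 • N.g + wu) * (b0 • 1 + b1 • N.g + wv)
      = (a0 * b0 + a1 * b1) • 1 + (a0 * b1 + a1 * b0) • N.g +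
        (a0 • wv + b0 • wu + a1 • (N.g * wv) + b1 • (wu * N.g) + wu * wv) := by
    simp only [add_mul, mul_add, smul_mul_assoc, mul_smul_comm, one_mul, mul_one, smul_smul,
      N.g_mul_g]
    module
  rw [hexp, N.chi_spec _ _ _ (by
    apply Submodule.add_mem
    apply Submodule.add_mem
    apply Submodule.add_mem
    apply Submodule.add_mem
    · exact Submodule.smul_mem _ _ hWv
    · exact Submodule.smul_mem _ _ hWu
    · exact Submodule.smul_mem _ _ (N.Wge_mul_left hWv N.g)
    · exact Submodule.smul_mem _ _ (N.Wge_mul_right hWu N.g)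
    · exact N.Wge_mul_right hWu wv)]
  ring

lemma chi_mul (u v : H) : N.chi (u * v) = N.chi u * N.chi v := by
  have h1 := N.decomp_mem u
  have h2 := N.decomp_mem v
  generalize ha0 : N.basis.repr u (0,0) = a0 at h1
  generalize ha1 : N.basis.repr u (1,0) = a1 at h1
  generalize hb0 : N.basis.repr v (0,0) = b0 at h2
  generalize hb1 : N.basis.repr v (1,0) = b1 at h2
  have hu : u = a0 • 1 + a1 • N.g + (u - a0 • 1 - a1 • N.g) := by abel
  have hv : v = b0 • 1 + b1 • N.g + (v - b0 • 1 - b1 • N.g) := by abel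
  have hcu : N.chi u = a0 - a1 := by
    conv_lhs => rw [hu]
    exact N.chi_spec a0 a1 _ h1
  have hcv : N.chi v = b0 - b1 := by
    conv_lhs => rw [hv]
    exact N.chi_spec b0 b1 _ h2
  have hmul : N.chi (u * v) = (a0 - a1) * (b0 - b1) := by
    conv_lhs => rw [hu, hv]
    exact N.chi_mul_aux a0 a1 b0 b1 _ _ h1 h2
  rw [hmul, hcu, hcv]

/-- counit of a monomial -/
lemma counit_mon (S : Fin (n-1) → Fin 2) :
    Coalgebra.counit (R := k) (N.mon S) = if S = 0 then 1 else 0 := by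
  have hc : ∀ h : H, Coalgebra.counit (R := k) h = Bialgebra.counitAlgHom k H h := fun _ => rfl
  by_cases hS : S = 0
  · subst hS
    rw [N.mon_zero, if_pos rfl, hc, map_one]
  · rcases exists_one hS with ⟨i, hi⟩
    rw [if_neg hS, hc, mon, map_list_prod]
    apply List.prod_eq_zero
    rw [List.map_map]
    apply List.mem_map.mpr
    refine ⟨i, List.mem_finRange i, ?_⟩
    simp only [Function.comp_apply]
    rw [N.fS_one S i hi, ← hc, N.counit_x i]

lemma counit_B (p : Fin 2 × (Fin (n-1) → Fin 2)) :
    Coalgebra.counit (R := k) (N.basis p) = if p.2 = 0 then 1 else 0 := by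
  have hc : ∀ h : H, Coalgebra.counit (R := k) h = Bialgebra.counitAlgHom k H h := fun _ => rfl
  rw [N.B_eq, hc, map_mul, map_pow, ← hc, ← hc, N.counit_g, one_pow, one_mul, N.counit_mon]

end NicholsData
end Infra5
section Infra6
variable {k H : Type*} [Field k] [Ring H] [HopfAlgebra k H] {n : ℕ}

namespace NicholsData
variable (N : NicholsData k n H)

lemma mon_eq_B (S : Fin (n-1) → Fin 2) : N.mon S = N.basis ((0 : Fin 2), S) := by
  rw [N.B_eq']
  simp

lemma gxi_eq_B (i : Fin (n-1)) : N.g * N.x i = N.basis ((1 : Fin 2), ei i) := by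
  rw [N.B_eq', N.mon_ei, show ((1:Fin 2):ℕ) = 1 from rfl, pow_one]

/-- the graded components of an element -/
noncomputable def zc (j : Fin 2) (z : H) : H :=
  ∑ S, N.basis.repr z (j, S) • N.basis (j, S)

lemma zc_mem (j : Fin 2) (z : H) : N.zc j z ∈ N.Esub j :=
  Submodule.sum_mem _ fun S _ =>
    Submodule.smul_mem _ _ (Submodule.subset_span ⟨S, rfl⟩)

lemma zc_add (z : H) : N.zc 0 z + N.zc 1 z = z := by
  conv_rhs => rw [← Module.Basis.sum_repr N.basis z]
  rw [Fintype.sum_prod_type, Fin.sum_univ_two]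
  rfl

lemma repr_zc_other {j : Fin 2} (z : H) {p : Fin 2 × (Fin (n-1) → Fin 2)}
    (hp : p.1 ≠ j) : N.basis.repr (N.zc j z) p = 0 :=
  N.repr_eq_zero_of_Esub (N.zc_mem j z) hp

lemma repr_zc_same (j : Fin 2) (z : H) (T : Fin (n-1) → Fin 2) :
    N.basis.repr (N.zc j z) (j, T) = N.basis.repr z (j, T) := by
  have h := congrArg (fun u => N.basis.repr u (j, T)) (N.zc_add z)
  simp only [map_add, Finsupp.add_apply] at h
  rcases fin2cases j with hj | hj <;> subst hj
  · rwa [N.repr_zc_other (j := 1) z (p := ((0:Fin 2), T)) (show (0:Fin 2) ≠ 1 by decide),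
      add_zero] at h
  · rwa [N.repr_zc_other (j := 0) z (p := ((1:Fin 2), T)) (show (1:Fin 2) ≠ 0 by decide),
      zero_add] at h

lemma chi_smul (c : k) (u : H) : N.chi (c • u) = c * N.chi u := by
  unfold chi
  rw [map_smul]
  simp only [Finsupp.smul_apply, smul_eq_mul]
  ring

lemma chi_zc_one (z : H) : N.chi (N.zc 1 z) = - N.basis.repr z (1, 0) := by
  unfold chi
  rw [N.repr_zc_other (j := 1) z (p := ((0:Fin 2), (0:Fin (n-1) → Fin 2)))
    (show (0:Fin 2) ≠ 1 by decide), N.repr_zc_same 1 z 0, zero_sub]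

lemma chi_z (z : H) : N.chi z = N.basis.repr z (0,0) - N.basis.repr z (1,0) := rfl

/-- slicing the partial-coaction equation -/
lemma slice_equation {z : H}
    (hz : z ⊗ₜ[k] z = (z ⊗ₜ[k] (1:H)) * Coalgebra.comul (R := k) z)
    (q : Fin 2 × (Fin (n-1) → Fin 2)) :
    N.basis.repr z q • z = z * N.sg q z := by
  have h := congrArg (sliceF (N.basis.coord q)) hz
  rw [sliceF_tmul, sliceF_mul, LinearMap.mulLeft_one, LinearMap.comp_id] at h
  rw [Module.Basis.coord_apply] at h
  exact h

lemma sg_z_zero (j' : Fin 2) (z : H) :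
    N.sg (j', (0 : Fin (n-1) → Fin 2)) z = N.zc j' z := by
  rw [N.sg_expand]
  simp only [N.sg_B_zero]
  rw [Fintype.sum_prod_type, Fin.sum_univ_two]
  rcases fin2cases j' with h | h <;> subst h
  · simp [zc, show ¬((1:Fin 2) = 0) by decide]
  · simp [zc, show ¬((0:Fin 2) = 1) by decide]

lemma counit_z (z : H) : Coalgebra.counit (R := k) z
    = N.basis.repr z (0,0) + N.basis.repr z (1,0) := by
  conv_lhs => rw [← Module.Basis.sum_repr N.basis z]
  rw [map_sum]
  simp only [map_smul, counit_B, smul_eq_mul, mul_ite, mul_one, mul_zero]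
  rw [Fintype.sum_prod_type, Fin.sum_univ_two]
  simp only [Finset.sum_ite_eq', Finset.mem_univ, if_pos]

/-- component extraction in the `Z₂`-grading -/
lemma comp_eq {u0 v0 u1 v1 : H} (hu0 : u0 ∈ N.Esub 0) (hv0 : v0 ∈ N.Esub 0)
    (hu1 : u1 ∈ N.Esub 1) (hv1 : v1 ∈ N.Esub 1) (heq : u0 + u1 = v0 + v1) :
    u0 = v0 ∧ u1 = v1 := by
  have key : ∀ p, N.basis.repr u0 p + N.basis.repr u1 p
      = N.basis.repr v0 p + N.basis.repr v1 p := by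
    intro p
    have := congrArg (fun u => N.basis.repr u p) heq
    simpa [map_add, Finsupp.add_apply] using this
  constructor
  · apply Module.Basis.ext_elem N.basis
    intro p
    rcases fin2cases p.1 with h | h
    · have := key p
      rwa [N.repr_eq_zero_of_Esub hu1 (by rw [h]; decide),
        N.repr_eq_zero_of_Esub hv1 (by rw [h]; decide), add_zero, add_zero] at this
    · rw [N.repr_eq_zero_of_Esub hu0 (by rw [h]; decide),
        N.repr_eq_zero_of_Esub hv0 (by rw [h]; decide)]
  · apply Module.Basis.ext_elem N.basis
    intro p
    rcases fin2cases p.1 with h | h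
    · rw [N.repr_eq_zero_of_Esub hu1 (by rw [h]; decide),
        N.repr_eq_zero_of_Esub hv1 (by rw [h]; decide)]
    · have := key p
      rwa [N.repr_eq_zero_of_Esub hu0 (by rw [h]; decide),
        N.repr_eq_zero_of_Esub hv0 (by rw [h]; decide), zero_add, zero_add] at this

/-- the reduced part of `zc 0` lies in the filtration -/
lemma zc0_sub_mem (z : H) :
    N.zc 0 z - N.basis.repr z (0,0) • 1 ∈ N.Fsub 1 := by
  unfold zc
  rw [Finset.sum_eq_sum_sdiff_singleton_add (Finset.mem_univ (0 : Fin (n-1) → Fin 2))]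
  rw [N.B00, add_sub_cancel_right]
  apply Submodule.sum_mem
  intro S hS
  simp only [Finset.mem_sdiff, Finset.mem_univ, Finset.mem_singleton, true_and] at hS
  exact Submodule.smul_mem _ _ (Submodule.subset_span ⟨S, wt_pos hS, rfl⟩)

/-- membership of the sliced element -/
lemma wi_mem (i : Fin (n-1)) (z : H) : N.sg ((1:Fin 2), ei i) z ∈ N.Esub 0 := by
  rw [N.sg_expand]
  apply Submodule.sum_mem
  intro p _
  obtain ⟨j, S⟩ := p
  obtain ⟨d, -, -, heq⟩ := N.sg_B_ei i j S
  rw [heq]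
  apply Submodule.smul_mem
  apply Submodule.smul_mem
  rw [N.mon_eq_B]
  exact Submodule.subset_span ⟨_, rfl⟩

/-- key coordinate extraction for the sliced element -/
lemma wi_coord (z : H) (i : Fin (n-1)) {S₀ : Fin (n-1) → Fin 2}
    (hS₀ : S₀ i = 1) :
    ∃ d : k, d ≠ 0 ∧
      N.basis.repr (N.sg ((1:Fin 2), ei i) z) ((0:Fin 2), Function.update S₀ i 0)
        = d * N.basis.repr z (1, S₀) := by
  obtain ⟨d₀, hd₀, -, heq₀⟩ := N.sg_B_ei i 1 S₀
  refine ⟨d₀, hd₀, ?_⟩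
  rw [N.sg_expand, map_sum]
  rw [Finsupp.finset_sum_apply]
  rw [Finset.sum_eq_single ((1:Fin 2), S₀)]
  · rw [map_smul, Finsupp.smul_apply, heq₀, if_pos ⟨rfl, hS₀⟩, map_smul, N.mon_eq_B,
      Module.Basis.repr_self, Finsupp.smul_apply, Finsupp.single_apply, if_pos rfl]
    simp [mul_comm]
  · intro p _ hpne
    obtain ⟨j, S⟩ := p
    obtain ⟨d, hd, -, heq⟩ := N.sg_B_ei i j S
    rw [map_smul, Finsupp.smul_apply, heq, map_smul, Finsupp.smul_apply]
    by_cases hcond : j = 1 ∧ S i = 1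
    · rw [if_pos hcond]
      have hSne : S ≠ S₀ := by
        intro hc
        exact hpne (by rw [hc, hcond.1])
      rw [N.mon_eq_B, Module.Basis.repr_self, Finsupp.single_apply, if_neg, smul_zero, smul_zero]
      intro hc
      have h2 : Function.update S i 0 = Function.update S₀ i 0 := congrArg Prod.snd hc
      apply hSne
      have := congrArg (fun T => Function.update T i 1) h2
      rwa [update_update hcond.2, update_update hS₀] at this
    · rw [if_neg hcond, zero_smul, smul_zero]
  · intro hmem
    exact absurd (Finset.mem_univ _) hmem

end NicholsData
end Infra6
section Infra7
variable {k H : Type*} [Field k] [Ring H] [HopfAlgebra k H] {n : ℕ}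

namespace NicholsData
variable (N : NicholsData k n H)

lemma pair_ne_fst {S S' : Fin (n-1) → Fin 2} {j j' : Fin 2} (h : j ≠ j') :
    ((j, S) : Fin 2 × (Fin (n-1) → Fin 2)) ≠ (j', S') :=
  fun hc => h (congrArg Prod.fst hc)

lemma pair_ne_snd {S S' : Fin (n-1) → Fin 2} {j j' : Fin 2} (h : S ≠ S') :
    ((j, S) : Fin 2 × (Fin (n-1) → Fin 2)) ≠ (j', S') :=
  fun hc => h (congrArg Prod.snd hc)

lemma idem_scalar_core (a : k) (ha : a ≠ 0) (w : H) (hmemw : w ∈ N.Fsub 1)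
    (hI0 : a • (a • (1:H) + w) = (a • (1:H) + w) * (a • (1:H) + w)) : w = 0 := by
  have hww : w * w = (-a) • w := by
    have hexp : (a • (1:H) + w) * (a • 1 + w) = (a*a) • 1 + (a • w + (a • w + w * w)) := by
      simp only [mul_add, add_mul, smul_mul_assoc, mul_smul_comm, one_mul, mul_one, smul_smul,
        smul_add]
      abel
    have hl : (a*a) • (1:H) + a • w = (a*a) • 1 + (a • w + (a • w + w * w)) := by
      rw [← hexp, ← hI0, smul_add, smul_smul]
    have h5 := add_left_cancel hl
    have h6 : a • w + w * w = 0 := (left_eq_add.mp h5)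
    rw [neg_smul]
    exact eq_neg_of_add_eq_zero_right h6
  have hv : ((-a⁻¹) • w) * ((-a⁻¹) • w) = (-a⁻¹) • w := by
    rw [smul_mul_smul_comm, hww, smul_smul]
    congr 1
    field_simp
  have hv0 := N.idem_eq_zero (Submodule.smul_mem _ _ hmemw) hv
  rcases smul_eq_zero.mp hv0 with h | h
  · exact absurd h (neg_ne_zero.mpr (inv_ne_zero ha))
  · exact h

/-- the `0`-component is scalar -/
lemma zc0_eq (z : H) (a : k) (haz : N.basis.repr z (0,0) = a) (ha : a ≠ 0)
    (hI0 : a • N.zc 0 z = N.zc 0 z * N.zc 0 z) :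
    N.zc 0 z = a • 1 := by
  have hmemw : N.zc 0 z - a • 1 ∈ N.Fsub 1 := by
    rw [← haz]; exact N.zc0_sub_mem z
  have hz0w : N.zc 0 z = a • 1 + (N.zc 0 z - a • 1) := by abel
  have hw0 : N.zc 0 z - a • 1 = 0 := by
    apply N.idem_scalar_core a ha _ hmemw
    rw [← hz0w]
    exact hI0
  rw [hz0w, hw0, add_zero]

/-- component extraction for an equation `c • z = z * w` with `w` even -/
lemma comp_of_eq0 {z z0 z1 w : H} (c : k) (hm0 : z0 ∈ N.Esub 0) (hm1 : z1 ∈ N.Esub 1)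
    (hw : w ∈ N.Esub 0) (hsum : z0 + z1 = z) (heq : c • z = z * w) :
    c • z0 = z0 * w ∧ c • z1 = z1 * w := by
  rw [← hsum, smul_add, add_mul] at heq
  exact N.comp_eq (Submodule.smul_mem _ _ hm0)
    (by have h := N.Esub_mul hm0 hw; rwa [show ((0:Fin 2) + 0) = 0 by decide] at h)
    (Submodule.smul_mem _ _ hm1)
    (by have h := N.Esub_mul hm1 hw; rwa [show ((1:Fin 2) + 0) = 1 by decide] at h)
    heq

/-- component extraction for an equation `c • z = z * w` with `w` odd -/
lemma comp_of_eq1 {z z0 z1 w : H} (c : k) (hm0 : z0 ∈ N.Esub 0) (hm1 : z1 ∈ N.Esub 1)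
    (hw : w ∈ N.Esub 1) (hsum : z0 + z1 = z) (heq : c • z = z * w) :
    c • z0 = z1 * w ∧ c • z1 = z0 * w := by
  rw [← hsum, smul_add, add_mul, add_comm (z0 * w)] at heq
  exact N.comp_eq (Submodule.smul_mem _ _ hm0)
    (by have h := N.Esub_mul hm1 hw; rwa [show ((1:Fin 2) + 1) = 0 by decide] at h)
    (Submodule.smul_mem _ _ hm1)
    (by have h := N.Esub_mul hm0 hw; rwa [show ((0:Fin 2) + 1) = 1 by decide] at h)
    heq

lemma backward (h2 : (2:k) ≠ 0) {z : H} (hpc : IsPartialCoaction k H z) :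
    z = 1 ∨ ∃ α : Fin (n-1) → k,
      z = (2:k)⁻¹ • ((1:H) + N.g) - ∑ i, α i • (N.g * N.x i) := by
  classical
  obtain ⟨hcu, heqt⟩ := hpc
  have hab : N.basis.repr z (0,0) + N.basis.repr z (1,0) = 1 := by
    rw [← N.counit_z z]; exact hcu
  have hI : N.basis.repr z (0,0) • z = z * N.zc 0 z := by
    have h := N.slice_equation heqt ((0:Fin 2), (0:Fin (n-1) → Fin 2))
    rwa [N.sg_z_zero] at h
  have hII : N.basis.repr z (1,0) • z = z * N.zc 1 z := by
    have h := N.slice_equation heqt ((1:Fin 2), (0:Fin (n-1) → Fin 2))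
    rwa [N.sg_z_zero] at h
  have hm0 : N.zc 0 z ∈ N.Esub 0 := N.zc_mem 0 z
  have hm1 : N.zc 1 z ∈ N.Esub 1 := N.zc_mem 1 z
  have hsum : N.zc 0 z + N.zc 1 z = z := N.zc_add z
  have hIc := N.comp_of_eq0 (N.basis.repr z (0,0)) hm0 hm1 hm0 hsum hI
  have hIIc := N.comp_of_eq1 (N.basis.repr z (1,0)) hm0 hm1 hm1 hsum hII
  -- chi equation : b (a-b) = 0
  have hchib : N.basis.repr z (1,0) *
      (N.basis.repr z (0,0) - N.basis.repr z (1,0)) = 0 := by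
    have hchi := congrArg N.chi hII
    rw [N.chi_smul, N.chi_mul, N.chi_zc_one, N.chi_z] at hchi
    have h3 : (2:k) * (N.basis.repr z (1,0) *
        (N.basis.repr z (0,0) - N.basis.repr z (1,0))) = 0 := by
      linear_combination hchi
    rcases mul_eq_zero.mp h3 with h | h
    · exact absurd h h2
    · exact h
  rcases mul_eq_zero.mp hchib with hb0 | habe
  · -- case b = 0 : z = 1
    left
    have ha1 : N.basis.repr z (0,0) = 1 := by rw [hb0, add_zero] at hab; exact hab
    have hz0 : N.zc 0 z = (1:k) • 1 := N.zc0_eq z 1 ha1 one_ne_zero (by rw [← ha1]; exact hIc.1)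
    rw [one_smul] at hz0
    have hz1 : N.zc 1 z = 0 := by
      have h := hIIc.2
      rw [hb0, zero_smul, hz0, one_mul] at h
      exact h.symm
    rw [← hsum, hz0, hz1, add_zero]
  · -- case a = b = 1/2
    right
    have hba : N.basis.repr z (1,0) = N.basis.repr z (0,0) :=
      (sub_eq_zero.mp habe).symm
    have h2a : (2:k) * N.basis.repr z (0,0) = 1 := by
      rw [← hab, hba]; ring
    have hane : N.basis.repr z (0,0) ≠ 0 := by
      intro hc
      rw [hc, mul_zero] at h2a
      exact absurd h2a.symm one_ne_zero
    have hav : N.basis.repr z (0,0) = (2:k)⁻¹ := by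
      field_simp
      linear_combination h2a
    have hz0 : N.zc 0 z = N.basis.repr z (0,0) • 1 :=
      N.zc0_eq z _ rfl hane hIc.1
    -- the x-slice equations
    have hwi : ∀ i : Fin (n-1), N.sg ((1:Fin 2), ei i) z
        = N.basis.repr z (1, ei i) • 1 := by
      intro i
      have hIII := N.slice_equation heqt ((1:Fin 2), ei i)
      have hwim : N.sg ((1:Fin 2), ei i) z ∈ N.Esub 0 := N.wi_mem i z
      have hcomp := N.comp_of_eq0 (N.basis.repr z (1, ei i)) hm0 hm1 hwim hsum hIII
      have h := hcomp.1
      rw [hz0, smul_smul, smul_mul_assoc, one_mul] at h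
      apply smul_right_injective H hane
      show N.basis.repr z (0,0) • (N.sg ((1:Fin 2), ei i) z)
          = N.basis.repr z (0,0) • (N.basis.repr z (1, ei i) • 1)
      rw [← h, smul_smul, mul_comm]
    -- vanishing of higher coefficients
    have hvanish : ∀ S : Fin (n-1) → Fin 2, ∀ i, S i = 1 → S ≠ ei i →
        N.basis.repr z (1, S) = 0 := by
      intro S i hSi hSne
      obtain ⟨d, hd, hco⟩ := N.wi_coord z i hSi
      rw [hwi i] at hco
      have hU : Function.update S i 0 ≠ 0 := by
        intro hc
        apply hSne
        funext b
        by_cases hbi : b = i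
        · subst hbi; rw [hSi, ei_self]
        · have hb := congrFun hc b
          rw [Function.update_of_ne hbi] at hb
          rw [hb, ei_ne i b hbi]
          rfl
      have hrepr0 : N.basis.repr (N.basis.repr z (1, ei i) • (1:H))
          ((0:Fin 2), Function.update S i 0) = 0 := by
        rw [map_smul, Finsupp.smul_apply, ← N.B00, Module.Basis.repr_self, Finsupp.single_apply,
          if_neg, smul_zero]
        intro hc
        exact hU (congrArg Prod.snd hc).symm
      rw [hrepr0] at hco
      rcases mul_eq_zero.mp hco.symm with h | h
      · exact absurd h hd
      · exact h
    -- final assembly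
    have hreprz0 : ∀ T, N.basis.repr z ((0:Fin 2), T)
        = if T = 0 then (2:k)⁻¹ else 0 := by
      intro T
      rw [← N.repr_zc_same 0 z T, hz0, map_smul, Finsupp.smul_apply, ← N.B00,
        Module.Basis.repr_self, Finsupp.single_apply]
      by_cases hT : T = 0
      · subst hT
        rw [if_pos rfl, if_pos rfl, smul_eq_mul, mul_one, hav]
      · rw [if_neg (pair_ne_snd (fun hc => hT hc.symm)), if_neg hT, smul_zero]
    have target : z = (2:k)⁻¹ • ((1:H) + N.g)
        + ∑ i, N.basis.repr z (1, ei i) • (N.g * N.x i) := by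
      apply Module.Basis.ext_elem N.basis
      intro p
      obtain ⟨j, S⟩ := p
      have hRHS : N.basis.repr ((2:k)⁻¹ • ((1:H) + N.g)
          + ∑ i, N.basis.repr z (1, ei i) • (N.g * N.x i)) (j, S)
          = (2:k)⁻¹ * ((if ((0:Fin 2), (0:Fin (n-1) → Fin 2)) = (j,S) then 1 else 0)
              + (if ((1:Fin 2), (0:Fin (n-1) → Fin 2)) = (j,S) then 1 else 0))
            + ∑ i, N.basis.repr z (1, ei i) *
              (if ((1:Fin 2), ei i) = (j,S) then 1 else 0) := by
        simp only [N.gxi_eq_B]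
        rw [map_add, map_smul, map_add, map_sum]
        simp only [Finsupp.add_apply, Finsupp.smul_apply, Finsupp.finset_sum_apply,
          map_smul, smul_eq_mul]
        rw [← N.B00, ← N.B10, Module.Basis.repr_self, Module.Basis.repr_self]
        simp only [Module.Basis.repr_self, Finsupp.single_apply, Finsupp.smul_apply, smul_eq_mul]
      rw [hRHS]
      rcases fin2cases j with hj | hj <;> subst hj
      · -- j = 0
        rw [if_neg (pair_ne_fst (S := (0:Fin (n-1) → Fin 2)) (S' := S)
            (show (1:Fin 2) ≠ 0 by decide)),
          Finset.sum_eq_zero (fun i _ => by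
            rw [if_neg (pair_ne_fst (S := ei i) (S' := S)
              (show (1:Fin 2) ≠ 0 by decide)), mul_zero]),
          add_zero, add_zero, hreprz0 S]
        by_cases hS : S = 0
        · subst hS
          rw [if_pos rfl, if_pos rfl, mul_one]
        · rw [if_neg hS, if_neg (pair_ne_snd (fun hc => hS hc.symm)), mul_zero]
      · -- j = 1
        rw [if_neg (pair_ne_fst (S := (0:Fin (n-1) → Fin 2)) (S' := S)
          (show (0:Fin 2) ≠ 1 by decide)), zero_add]
        by_cases hS : S = 0
        · subst hS
          rw [if_pos rfl, mul_one,
            Finset.sum_eq_zero (fun i _ => by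
              rw [if_neg (pair_ne_snd (ei_ne_zero i)), mul_zero]),
            add_zero, ← hav, ← hba]
        · rw [if_neg (pair_ne_snd (fun hc => hS hc.symm)), mul_zero, zero_add]
          by_cases hei : ∃ i0, S = ei i0
          · obtain ⟨i0, rfl⟩ := hei
            rw [Finset.sum_eq_single i0]
            · rw [if_pos rfl, mul_one]
            · intro i _ hine
              rw [if_neg (pair_ne_snd (fun hc => hine (ei_inj hc))), mul_zero]
            · intro hmem
              exact absurd (Finset.mem_univ _) hmem
          · push_neg at hei
            obtain ⟨i, hSi⟩ := exists_one hS
            rw [hvanish S i hSi (hei i)]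
            rw [Finset.sum_eq_zero (fun i' _ => by
              rw [if_neg (pair_ne_snd (fun hc => (hei i') hc.symm)), mul_zero])]
    refine ⟨fun i => - N.basis.repr z (1, ei i), ?_⟩
    have hconv : (2:k)⁻¹ • ((1:H) + N.g)
        - ∑ i, (- N.basis.repr z (1, ei i)) • (N.g * N.x i)
        = (2:k)⁻¹ • ((1:H) + N.g) + ∑ i, N.basis.repr z (1, ei i) • (N.g * N.x i) := by
      simp only [neg_smul, Finset.sum_neg_distrib, sub_neg_eq_add]
    show z = (2:k)⁻¹ • ((1:H) + N.g) - ∑ i, (- N.basis.repr z (1, ei i)) • (N.g * N.x i)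
    rw [hconv]
    exact target

end NicholsData
end Infra7
section Infra8
variable {k H : Type*} [Field k] [Ring H] [HopfAlgebra k H] {n : ℕ}

namespace NicholsData
variable (N : NicholsData k n H)

lemma xanti2 (h2 : (2:k) ≠ 0) (γ : Fin (n-1) → Fin (n-1) → k)
    (hsym : ∀ i j, γ i j = γ j i) :
    ∑ i, ∑ j, γ i j • (N.x i * N.x j) = (0:H) := by
  have hneg : (∑ i, ∑ j, γ i j • (N.x i * N.x j))
      = - ∑ i, ∑ j, γ i j • (N.x i * N.x j) := by
    conv_lhs => rw [Finset.sum_comm]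
    rw [← Finset.sum_neg_distrib]
    refine Finset.sum_congr rfl fun i _ => ?_
    rw [← Finset.sum_neg_distrib]
    refine Finset.sum_congr rfl fun j _ => ?_
    rw [N.x_mul_x j i, smul_neg, hsym j i]
  have h2S : (2:k) • (∑ i, ∑ j, γ i j • (N.x i * N.x j)) = 0 := by
    rw [two_smul]
    nth_rewrite 2 [hneg]
    rw [add_neg_cancel]
  rcases smul_eq_zero.mp h2S with h | h
  · exact absurd h h2
  · exact h

lemma hQ1 (h2 : (2:k) ≠ 0) (α : Fin (n-1) → k) :
    ∑ j, ∑ i, (α j * α i) • (N.x i * N.x j) = (0:H) := by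
  rw [Finset.sum_comm]
  exact N.xanti2 h2 (fun a b => α b * α a) (fun a b => mul_comm _ _)

lemma hQ2 (h2 : (2:k) ≠ 0) (α : Fin (n-1) → k) :
    ∑ j, ∑ i, (α j * α i) • (N.x j * N.x i) = (0:H) :=
  N.xanti2 h2 (fun a b => α a * α b) (fun a b => mul_comm _ _)

lemma gx_mul_g (i : Fin (n-1)) : (N.g * N.x i) * N.g = -(N.x i) := by
  rw [mul_assoc, N.x_mul_g, mul_neg, ← mul_assoc, N.g_mul_g, one_mul]

lemma g_mul_gx (i : Fin (n-1)) : N.g * (N.g * N.x i) = N.x i := by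
  rw [← mul_assoc, N.g_mul_g, one_mul]

lemma gx_mul_gx (i j : Fin (n-1)) : (N.g * N.x i) * (N.g * N.x j) = -(N.x i * N.x j) := by
  rw [← mul_assoc, mul_assoc N.g (N.x i) N.g, N.x_mul_g, mul_neg, ← mul_assoc, N.g_mul_g,
    one_mul, neg_mul]

section Za
variable (h2 : (2:k) ≠ 0) (α : Fin (n-1) → k)

local notation "za" => (2:k)⁻¹ • ((1:H) + N.g) - ∑ i, α i • (N.g * N.x i)

lemma za_mul_g : za * N.g = (2:k)⁻¹ • ((1:H) + N.g) + ∑ i, α i • N.x i := by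
  rw [sub_mul, smul_mul_assoc, add_mul, one_mul, N.g_mul_g, Finset.sum_mul]
  simp only [smul_mul_assoc, N.gx_mul_g, smul_neg]
  rw [Finset.sum_neg_distrib, sub_neg_eq_add, add_comm (N.g) 1]

lemma za_mul_gx (j : Fin (n-1)) : za * (N.g * N.x j)
    = (2:k)⁻¹ • (N.x j + N.g * N.x j) + ∑ i, α i • (N.x i * N.x j) := by
  rw [sub_mul, smul_mul_assoc, add_mul, one_mul, N.g_mul_gx, Finset.sum_mul]
  simp only [smul_mul_assoc, N.gx_mul_gx, smul_neg]
  rw [Finset.sum_neg_distrib, sub_neg_eq_add, add_comm (N.g * N.x j) (N.x j)]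

lemma g_mul_za : N.g * za = (2:k)⁻¹ • ((1:H) + N.g) - ∑ i, α i • N.x i := by
  rw [mul_sub, mul_smul_comm, mul_add, mul_one, N.g_mul_g, Finset.mul_sum]
  simp only [mul_smul_comm, N.g_mul_gx]
  rw [add_comm N.g 1]

lemma gx_mul_za (j : Fin (n-1)) : (N.g * N.x j) * za
    = (2:k)⁻¹ • (N.g * N.x j - N.x j) + ∑ i, α i • (N.x j * N.x i) := by
  rw [mul_sub, mul_smul_comm, mul_add, mul_one, Finset.mul_sum]
  simp only [mul_smul_comm, N.gx_mul_gx, smul_neg]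
  rw [Finset.sum_neg_distrib, sub_neg_eq_add, N.gx_mul_g, ← sub_eq_add_neg]

include h2 in
lemma key1 : (2:k)⁻¹ • (za * N.g) - ∑ j, α j • (za * (N.g * N.x j)) = (2:k)⁻¹ • za := by
  rw [N.za_mul_g α]
  simp only [N.za_mul_gx α]
  simp only [smul_add, smul_sub, smul_smul, Finset.smul_sum, smul_smul]
  rw [Finset.sum_add_distrib, Finset.sum_add_distrib]
  rw [N.hQ1 h2 α, add_zero]
  simp only [mul_comm ((2:k)⁻¹)]
  abel

include h2 in
lemma key2 : (2:k)⁻¹ • (N.g * za) - ∑ j, α j • ((N.g * N.x j) * za) = (2:k)⁻¹ • za := by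
  rw [N.g_mul_za α]
  simp only [N.gx_mul_za α]
  simp only [smul_add, smul_sub, smul_smul, Finset.smul_sum, smul_smul]
  rw [Finset.sum_add_distrib, Finset.sum_sub_distrib]
  rw [N.hQ2 h2 α, add_zero]
  simp only [mul_comm ((2:k)⁻¹)]
  abel

lemma comul_za : Coalgebra.comul (R := k) (za : H)
    = (2:k)⁻¹ • ((1:H) ⊗ₜ[k] (1:H) + N.g ⊗ₜ[k] N.g)
      - ∑ i, α i • ((N.g * N.x i) ⊗ₜ[k] N.g + (1:H) ⊗ₜ[k] (N.g * N.x i)) := by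
  rw [map_sub, map_smul, map_add, map_sum, Bialgebra.comul_one, N.comul_g]
  congr 1
  refine Finset.sum_congr rfl fun i _ => ?_
  rw [map_smul, Bialgebra.comul_mul, N.comul_g, N.comul_x, mul_add,
    Algebra.TensorProduct.tmul_mul_tmul, Algebra.TensorProduct.tmul_mul_tmul,
    mul_one, N.g_mul_g]

include h2 in
lemma counit_za : Coalgebra.counit (R := k) (za : H) = 1 := by
  have hc : ∀ h : H, Coalgebra.counit (R := k) h = Bialgebra.counitAlgHom k H h := fun _ => rfl
  rw [map_sub, map_smul, map_add, Bialgebra.counit_one, N.counit_g, map_sum]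
  rw [Finset.sum_congr rfl (fun i _ => by
      rw [map_smul, hc, map_mul, ← hc, ← hc, N.counit_x, mul_zero, smul_zero] :
    ∀ i ∈ Finset.univ, Coalgebra.counit (R := k) (α i • (N.g * N.x i)) = (0:k))]
  rw [Finset.sum_const_zero, sub_zero, smul_eq_mul]
  rw [show (1:k) + 1 = 2 by norm_num, inv_mul_cancel₀ h2]

include h2 in
lemma forward_za :
    ((za : H) ⊗ₜ[k] (za : H) = ((za : H) ⊗ₜ[k] (1 : H)) * Coalgebra.comul (R := k) (za : H))
    ∧ ((za : H) ⊗ₜ[k] (za : H) = Coalgebra.comul (R := k) (za : H) * ((za : H) ⊗ₜ[k] (1 : H))) := by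
  have hL : ∀ u : H, u ⊗ₜ[k] (za : H)
      = (2:k)⁻¹ • (u ⊗ₜ[k] (1:H)) + (2:k)⁻¹ • (u ⊗ₜ[k] N.g)
        - ∑ i, α i • (u ⊗ₜ[k] (N.g * N.x i)) := by
    intro u
    rw [TensorProduct.tmul_sub, TensorProduct.tmul_smul, TensorProduct.tmul_add, smul_add,
      TensorProduct.tmul_sum]
    congr 1
    exact Finset.sum_congr rfl fun i _ => by rw [TensorProduct.tmul_smul]
  have keyT1 : (2:k)⁻¹ • (((za : H) * N.g) ⊗ₜ[k] N.g)
      - ∑ j, α j • (((za : H) * (N.g * N.x j)) ⊗ₜ[k] N.g)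
      = (2:k)⁻¹ • ((za : H) ⊗ₜ[k] N.g) := by
    rw [TensorProduct.smul_tmul',
      Finset.sum_congr rfl (fun j _ => TensorProduct.smul_tmul' (α j)
        ((za : H) * (N.g * N.x j)) N.g),
      ← TensorProduct.sum_tmul, ← TensorProduct.sub_tmul, N.key1 h2 α,
      TensorProduct.smul_tmul']
  have keyT2 : (2:k)⁻¹ • ((N.g * (za : H)) ⊗ₜ[k] N.g)
      - ∑ j, α j • (((N.g * N.x j) * (za : H)) ⊗ₜ[k] N.g)
      = (2:k)⁻¹ • ((za : H) ⊗ₜ[k] N.g) := by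
    rw [TensorProduct.smul_tmul',
      Finset.sum_congr rfl (fun j _ => TensorProduct.smul_tmul' (α j)
        ((N.g * N.x j) * (za : H)) N.g),
      ← TensorProduct.sum_tmul, ← TensorProduct.sub_tmul, N.key2 h2 α,
      TensorProduct.smul_tmul']
  constructor
  · have hprod : ((za : H) ⊗ₜ[k] (1 : H)) * Coalgebra.comul (R := k) (za : H)
        = (2:k)⁻¹ • ((za : H) ⊗ₜ[k] (1:H)) + (2:k)⁻¹ • (((za : H) * N.g) ⊗ₜ[k] N.g)
          - (∑ j, α j • (((za : H) * (N.g * N.x j)) ⊗ₜ[k] N.g)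
            + ∑ j, α j • ((za : H) ⊗ₜ[k] (N.g * N.x j))) := by
      rw [N.comul_za α, mul_sub, mul_smul_comm, mul_add, Finset.mul_sum]
      simp only [mul_smul_comm, mul_add, Algebra.TensorProduct.tmul_mul_tmul, one_mul, mul_one]
      simp only [smul_add]
      rw [Finset.sum_add_distrib]
    rw [hprod, hL]
    rw [← keyT1]
    abel
  · have hprod : Coalgebra.comul (R := k) (za : H) * ((za : H) ⊗ₜ[k] (1 : H))
        = (2:k)⁻¹ • ((za : H) ⊗ₜ[k] (1:H)) + (2:k)⁻¹ • ((N.g * (za : H)) ⊗ₜ[k] N.g)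
          - (∑ j, α j • (((N.g * N.x j) * (za : H)) ⊗ₜ[k] N.g)
            + ∑ j, α j • ((za : H) ⊗ₜ[k] (N.g * N.x j))) := by
      rw [N.comul_za α, sub_mul, smul_mul_assoc, add_mul, Finset.sum_mul]
      simp only [smul_mul_assoc, add_mul, Algebra.TensorProduct.tmul_mul_tmul, one_mul, mul_one]
      simp only [smul_add]
      rw [Finset.sum_add_distrib]
    rw [hprod, hL]
    rw [← keyT2]
    abel

end Za
end NicholsData
end Infra8
/-- Theorem 4.2.2: an element `z` of the Nichols Hopf algebra `H_{2^n}` is a partial coaction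
of `H_{2^n}` on `k` if and only if `z = 1` (the global coaction) or
`z = z_α = (1+g)/2 − Σ_{i=1}^{n−1} α_i·g x_i` for some `α ∈ k^{n−1}`.
Moreover, all these partial coactions are symmetric. -/
theorem thm_4_2_2 {k H : Type*} [Field k] [Ring H] [HopfAlgebra k H]
    {n : ℕ} (hn : 2 ≤ n) (hchar : ringChar k ≠ 2)
    (N : NicholsData k n H) (z : H) :
    (IsPartialCoaction k H z ↔
      z = 1 ∨
      ∃ α : Fin (n - 1) → k,
        z = (2 : k)⁻¹ • ((1 : H) + N.g) - ∑ i, α i • (N.g * N.x i)) ∧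
    (IsPartialCoaction k H z → IsSymmPartialCoaction k H z) := by
  have h2 : (2:k) ≠ 0 := by
    intro hc
    haveI := ringChar.charP k
    have hdvd : ringChar k ∣ 2 :=
      (CharP.cast_eq_zero_iff k (ringChar k) 2).mp (by exact_mod_cast hc)
    rcases (Nat.dvd_prime Nat.prime_two).mp hdvd with h1 | h1
    · exact CharP.char_ne_one k (ringChar k) h1
    · exact hchar h1
  have hone_pc : IsPartialCoaction k H (1:H) := by
    refine ⟨Bialgebra.counit_one, ?_⟩
    rw [Bialgebra.comul_one, ← Algebra.TensorProduct.one_def, mul_one]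
  have hone_symm : (1:H) ⊗ₜ[k] (1:H) = Coalgebra.comul (R := k) (1:H) * ((1:H) ⊗ₜ[k] (1:H)) := by
    rw [Bialgebra.comul_one, ← Algebra.TensorProduct.one_def, one_mul]
  constructor
  · constructor
    · exact fun hpc => N.backward h2 hpc
    · rintro (rfl | ⟨α, rfl⟩)
      · exact hone_pc
      · exact ⟨N.counit_za h2 α, (N.forward_za h2 α).1⟩
  · intro hpc
    rcases N.backward h2 hpc with rfl | ⟨α, rfl⟩
    · exact ⟨hone_pc, hone_symm⟩
    · exact ⟨⟨N.counit_za h2 α, (N.forward_za h2 α).1⟩, (N.forward_za h2 α).2⟩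
end

section
/- Let G be a group and k a field. (1) For every subgroup N of G, the linear map λ_N : kG → k defined on the canonical basis by λ_N(g) = 1 if g ∈ N and λ_N(g) = 0 otherwise is a symmetric partial action of the group algebra kG on k. (2) Conversely, if λ : kG → k is a partial action of kG on k, then λ(g) ∈ {0, 1} for every g ∈ G, the set N = {g ∈ G : λ(g) = 1} = {g ∈ G : λ(g) ≠ 0} is a subgroup of G, and λ = λ_N. (Example 2.2.2) -/
open scoped TensorProduct
open scoped Classical

/-- A realization of the group algebra `kG` as a Hopf algebra: a Hopf algebra `H` over `k`
with a `k`-basis indexed by `G` whose elements multiply like `G` and are group-like. -/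
structure GroupAlgebraData (k : Type*) [Field k] (G : Type*) [Group G] (H : Type*)
    [Ring H] [HopfAlgebra k H] where
  basis : Module.Basis G k H
  basis_one : basis 1 = 1
  basis_mul : ∀ g h : G, basis g * basis h = basis (g * h)
  comul_basis : ∀ g : G, Coalgebra.comul (R := k) (basis g) = basis g ⊗ₜ[k] basis g
  counit_basis : ∀ g : G, Coalgebra.counit (R := k) (basis g) = 1


section Aux

variable {k G H : Type*} [Field k] [Group G] [Ring H] [HopfAlgebra k H]

lemma lCont_basis (A : GroupAlgebraData k G H) (lam : H →ₗ[k] k) (g : G) :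
    lCont k H lam (A.basis g) = lam (A.basis g) • A.basis g := by
  simp [lCont, A.comul_basis]

lemma rCont_basis (A : GroupAlgebraData k G H) (lam : H →ₗ[k] k) (g : G) :
    rCont k H lam (A.basis g) = lam (A.basis g) • A.basis g := by
  simp [rCont, A.comul_basis]

lemma bilin_ext (A : GroupAlgebraData k G H) (lam : H →ₗ[k] k) (c : H →ₗ[k] H)
    (hb : ∀ g y : G, lam (A.basis g) * lam (A.basis y) = lam (c (A.basis g) * A.basis y)) :
    ∀ h y : H, lam h * lam y = lam (c h * y) := by
  have key : (LinearMap.mul k k).compl₁₂ lam lam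
      = ((LinearMap.mul k H).comp c).compr₂ lam := by
    apply A.basis.ext; intro g
    apply A.basis.ext; intro y
    simpa using hb g y
  intro h y
  simpa using LinearMap.congr_fun (LinearMap.congr_fun key h) y

end Aux

/-- Example 2.2.2: let `G` be a group and `k` a field.
(1) For every subgroup `N` of `G`, the linear map `λ_N : kG → k` defined on the canonical
basis by `λ_N(g) = 1` if `g ∈ N` and `λ_N(g) = 0` otherwise is a symmetric partial action of
the group algebra `kG` on `k`.
(2) Conversely, if `λ : kG → k` is a partial action of `kG` on `k`, then `λ(g) ∈ {0, 1}` for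
every `g ∈ G`, and the set `N = {g ∈ G : λ(g) = 1} = {g ∈ G : λ(g) ≠ 0}` is a subgroup of `G`
with `λ = λ_N`. -/
theorem example_2_2_2 {k G H : Type*} [Field k] [Group G] [Ring H] [HopfAlgebra k H]
    (A : GroupAlgebraData k G H) :
    (∀ N : Subgroup G, ∀ lam : H →ₗ[k] k,
      (∀ g : G, lam (A.basis g) = if g ∈ N then 1 else 0) →
      IsSymmPartialAction k H lam) ∧
    (∀ lam : H →ₗ[k] k, IsPartialAction k H lam →
      (∀ g : G, lam (A.basis g) = 0 ∨ lam (A.basis g) = 1) ∧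
      ∃ N : Subgroup G,
        (∀ g : G, g ∈ N ↔ lam (A.basis g) ≠ 0) ∧
        (∀ g : G, lam (A.basis g) = if g ∈ N then 1 else 0)) := by
  constructor
  · intro N lam hlam
    have hb : ∀ g y : G, lam (A.basis g) * lam (A.basis y)
        = lam (A.basis g) * lam (A.basis (g * y)) := by
      intro g y
      by_cases hg : g ∈ N
      · simp [hlam, hg, N.mul_mem_cancel_left hg]
      · simp [hlam, hg]
    have h1 : lam 1 = 1 := by rw [← A.basis_one, hlam]; simp [N.one_mem]
    have hcond : ∀ c : H →ₗ[k] H,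
        (∀ g : G, c (A.basis g) = lam (A.basis g) • A.basis g) →
        ∀ h y : H, lam h * lam y = lam (c h * y) := by
      intro c hc
      refine bilin_ext A lam c ?_
      intro g y
      rw [hc, smul_mul_assoc, map_smul, A.basis_mul, smul_eq_mul]
      exact hb g y
    exact ⟨⟨h1, hcond _ (lCont_basis A lam)⟩, hcond _ (rCont_basis A lam)⟩
  · intro lam hp
    have key : ∀ g y : G, lam (A.basis g) * lam (A.basis y)
        = lam (A.basis g) * lam (A.basis (g * y)) := by
      intro g y
      have := hp.2 (A.basis g) (A.basis y)
      rwa [lCont_basis, smul_mul_assoc, map_smul, A.basis_mul, smul_eq_mul] at this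
    have h1 : lam (A.basis 1) = 1 := by rw [A.basis_one]; exact hp.1
    have dich : ∀ g : G, lam (A.basis g) = 0 ∨ lam (A.basis g) = 1 := by
      intro g
      have hk := key g 1
      rw [mul_one, h1, mul_one] at hk
      have : lam (A.basis g) * (lam (A.basis g) - 1) = 0 := by ring_nf; linear_combination -hk
      rcases mul_eq_zero.mp this with h | h
      · exact Or.inl h
      · exact Or.inr (sub_eq_zero.mp h)
    refine ⟨dich, ?_⟩
    have mulm : ∀ {a b : G}, lam (A.basis a) = 1 → lam (A.basis b) = 1 →
        lam (A.basis (a * b)) = 1 := by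
      intro a b ha hb
      have := key a b
      rw [ha, hb, one_mul, one_mul] at this
      exact this.symm
    have invm : ∀ {a : G}, lam (A.basis a) = 1 → lam (A.basis a⁻¹) = 1 := by
      intro a ha
      have := key a a⁻¹
      rw [ha, one_mul, one_mul, mul_inv_cancel, h1] at this
      exact this
    refine ⟨{ carrier := {g : G | lam (A.basis g) = 1}
              one_mem' := h1
              mul_mem' := fun ha hb => mulm ha hb
              inv_mem' := fun ha => invm ha }, ?_, ?_⟩
    · intro g
      constructor
      · intro hg; simp only [Subgroup.mem_mk, Set.mem_setOf_eq] at hg; rw [hg]; exact one_ne_zero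
      · intro hg
        rcases dich g with h | h
        · exact absurd h hg
        · exact h
    · intro g
      by_cases hg : lam (A.basis g) = 1
      · simp only [hg]; rw [if_pos]; exact hg
      · rcases dich g with h | h
        · rw [h, if_neg]
          intro hmem
          exact hg hmem
        · exact absurd h hg
end

section
/- Let G be a group, k a field, N a finite subset of G, and z = Σ_{g∈N} α_g·g ∈ kG with α_g ≠ 0 for all g ∈ N. Then z is a partial coaction of kG on k (i.e. ε(z) = 1 and z⊗z = (z⊗1)Δ(z)) if and only if N is a subgroup of G, char k does not divide |N|, and α_g = 1/|N| for all g ∈ N. (Example 2.2.8) -/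
open scoped TensorProduct
open scoped Classical

section Aux
variable {k G H : Type*} [Field k] [Group G] [Ring H] [HopfAlgebra k H]
variable (A : GroupAlgebraData k G H) (N : Finset G) (α : G → k)

lemma repr_z (a : G) :
    A.basis.repr (∑ g ∈ N, α g • A.basis g) a = if a ∈ N then α a else 0 := by
  rw [map_sum]
  simp only [map_smul, Module.Basis.repr_self, Finsupp.coe_finset_sum, Finset.sum_apply,
    Finsupp.smul_apply, Finsupp.single_apply, smul_eq_mul, mul_ite, mul_one, mul_zero]
  rw [Finset.sum_ite_eq' N a α]

lemma repr_z_mul (b a : G) :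
    A.basis.repr ((∑ g ∈ N, α g • A.basis g) * A.basis b) a
      = if a * b⁻¹ ∈ N then α (a * b⁻¹) else 0 := by
  rw [Finset.sum_mul]
  have h1 : ∀ g ∈ N, (α g • A.basis g) * A.basis b = α g • A.basis (g * b) := by
    intro g _; rw [smul_mul_assoc, A.basis_mul]
  rw [Finset.sum_congr rfl h1, map_sum]
  simp only [map_smul, Module.Basis.repr_self, Finsupp.coe_finset_sum, Finset.sum_apply,
    Finsupp.smul_apply, Finsupp.single_apply, smul_eq_mul, mul_ite, mul_one, mul_zero]
  have heq : ∀ g : G, (g * b = a) ↔ (g = a * b⁻¹) := fun g => eq_mul_inv_iff_mul_eq.symm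
  simp only [heq]
  rw [Finset.sum_ite_eq' N (a * b⁻¹) α]

lemma comul_z :
    Coalgebra.comul (R := k) (∑ g ∈ N, α g • A.basis g)
      = ∑ g ∈ N, α g • (A.basis g ⊗ₜ[k] A.basis g) := by
  rw [map_sum]; exact Finset.sum_congr rfl fun g _ => by rw [map_smul, A.comul_basis]

lemma counit_z :
    Coalgebra.counit (R := k) (∑ g ∈ N, α g • A.basis g) = ∑ g ∈ N, α g := by
  rw [map_sum]
  exact Finset.sum_congr rfl fun g _ => by rw [map_smul, A.counit_basis, smul_eq_mul, mul_one]

lemma tensor_eq_iff :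
    ((∑ g ∈ N, α g • A.basis g) ⊗ₜ[k] (∑ g ∈ N, α g • A.basis g) =
      ((∑ g ∈ N, α g • A.basis g) ⊗ₜ[k] (1 : H)) *
        Coalgebra.comul (R := k) (∑ g ∈ N, α g • A.basis g)) ↔
    ∀ a b : G, (if a ∈ N then α a else 0) * (if b ∈ N then α b else 0) =
      (if b ∈ N then α b * (if a * b⁻¹ ∈ N then α (a * b⁻¹) else 0) else 0) := by
  classical
  set z := ∑ g ∈ N, α g • A.basis g with hz
  set T := A.basis.tensorProduct A.basis with hT
  have hRHS : (z ⊗ₜ[k] (1 : H)) * Coalgebra.comul (R := k) z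
      = ∑ g ∈ N, α g • ((z * A.basis g) ⊗ₜ[k] A.basis g) := by
    rw [comul_z A N α, Finset.mul_sum]
    refine Finset.sum_congr rfl fun g _ => ?_
    rw [mul_smul_comm, Algebra.TensorProduct.tmul_mul_tmul, one_mul]
  have hreprL : ∀ a b : G, T.repr (z ⊗ₜ[k] z) (a, b)
      = (if a ∈ N then α a else 0) * (if b ∈ N then α b else 0) := by
    intro a b
    rw [hT, Module.Basis.tensorProduct_repr_tmul_apply, repr_z A N α, repr_z A N α, smul_eq_mul,
      mul_comm]
  have hreprR : ∀ a b : G,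
      T.repr ((z ⊗ₜ[k] (1 : H)) * Coalgebra.comul (R := k) z) (a, b)
      = (if b ∈ N then α b * (if a * b⁻¹ ∈ N then α (a * b⁻¹) else 0) else 0) := by
    intro a b
    rw [hRHS, map_sum]
    simp only [Finsupp.coe_finset_sum, Finset.sum_apply]
    have h2 : ∀ g ∈ N, (T.repr (α g • ((z * A.basis g) ⊗ₜ[k] A.basis g))) (a, b)
        = (if g = b then α g * (if a * g⁻¹ ∈ N then α (a * g⁻¹) else 0) else 0) := by
      intro g _
      rw [map_smul, Finsupp.smul_apply, hT, Module.Basis.tensorProduct_repr_tmul_apply,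
        repr_z_mul A N α, Module.Basis.repr_self, Finsupp.single_apply]
      by_cases hgb : g = b <;> simp [hgb]
    rw [Finset.sum_congr rfl h2,
      Finset.sum_ite_eq' N b (fun g => α g * (if a * g⁻¹ ∈ N then α (a * g⁻¹) else 0))]
  constructor
  · intro h a b
    rw [← hreprL a b, h, hreprR a b]
  · intro h
    apply T.repr.injective
    ext p
    obtain ⟨a, b⟩ := p
    rw [hreprL a b, hreprR a b, h a b]

end Aux

/-- Example 2.2.8: let `G` be a group, `k` a field, `N` a finite subset of `G` and
`z = Σ_{g∈N} α_g·g ∈ kG` with all `α_g ≠ 0`.  Then `z` is a partial coaction of `kG` on `k`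
(i.e. `ε(z) = 1` and `z⊗z = (z⊗1)Δ(z)`) if and only if `N` is a subgroup of `G`, `char k`
does not divide `|N|`, and `α_g = 1/|N|` for all `g ∈ N`. -/
theorem example_2_2_8 {k G H : Type*} [Field k] [Group G] [Ring H] [HopfAlgebra k H]
    (A : GroupAlgebraData k G H) (N : Finset G) (α : G → k)
    (hα : ∀ g ∈ N, α g ≠ 0) :
    IsPartialCoaction k H (∑ g ∈ N, α g • A.basis g) ↔
      (∃ N' : Subgroup G, (N : Set G) = (N' : Set G)) ∧
      ¬ ((ringChar k : ℕ) ∣ N.card) ∧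
      ∀ g ∈ N, α g = (N.card : k)⁻¹ := by
  classical
  haveI : CharP k (ringChar k) := ringChar.charP k
  rw [IsPartialCoaction, counit_z A N α, tensor_eq_iff A N α]
  constructor
  · rintro ⟨h1, h2⟩
    have key : ∀ b ∈ N, ∀ a : G,
        (if a ∈ N then α a else 0) = (if a * b⁻¹ ∈ N then α (a * b⁻¹) else 0) := by
      intro b hb a
      have h := h2 a b
      rw [if_pos hb, if_pos hb, mul_comm] at h
      exact mul_left_cancel₀ (hα b hb) h
    have memiff : ∀ b ∈ N, ∀ a : G, a ∈ N ↔ a * b⁻¹ ∈ N := by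
      intro b hb a
      constructor
      · intro ha
        by_contra hcon
        have h := key b hb a; rw [if_pos ha, if_neg hcon] at h; exact hα a ha h
      · intro ha
        by_contra hcon
        have h := key b hb a; rw [if_neg hcon, if_pos ha] at h; exact hα _ ha h.symm
    have valeq : ∀ b ∈ N, ∀ a ∈ N, α a = α (a * b⁻¹) := by
      intro b hb a ha
      have h := key b hb a; rwa [if_pos ha, if_pos ((memiff b hb a).mp ha)] at h
    have hNne : N.Nonempty := by
      by_contra hcon
      rw [Finset.not_nonempty_iff_eq_empty] at hcon
      rw [hcon, Finset.sum_empty] at h1; exact zero_ne_one h1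
    obtain ⟨b0, hb0⟩ := hNne
    have hone : (1 : G) ∈ N := by
      have h := (memiff b0 hb0 b0).mp hb0; rwa [mul_inv_cancel] at h
    have hinv : ∀ b ∈ N, b⁻¹ ∈ N := fun b hb => by
      have h := (memiff b hb 1).mp hone; rwa [one_mul] at h
    have hmul : ∀ a ∈ N, ∀ b ∈ N, a * b ∈ N := fun a ha b hb => by
      have h := (memiff b⁻¹ (hinv b hb) a).mp ha; rwa [inv_inv] at h
    have hconst : ∀ g ∈ N, α g = α 1 := fun g hg => by
      have h := valeq g hg g hg; rwa [mul_inv_cancel] at h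
    have hsum : (N.card : k) * α 1 = 1 := by
      rw [Finset.sum_congr rfl hconst, Finset.sum_const, nsmul_eq_mul] at h1
      exact h1
    have hcard : (N.card : k) ≠ 0 := fun h => by
      rw [h, zero_mul] at hsum; exact zero_ne_one hsum
    refine ⟨⟨{ carrier := ↑N
               one_mem' := hone
               mul_mem' := fun {a b} ha hb => hmul a ha b hb
               inv_mem' := fun {a} ha => hinv a ha }, rfl⟩, ?_, ?_⟩
    · intro hdvd
      exact hcard ((CharP.cast_eq_zero_iff k (ringChar k) N.card).mpr hdvd)
    · intro g hg
      rw [hconst g hg]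
      rw [mul_comm] at hsum
      exact eq_inv_of_mul_eq_one_left hsum
  · rintro ⟨⟨N', hN'⟩, hchar, hval⟩
    have hcard : (N.card : k) ≠ 0 := fun h =>
      hchar ((CharP.cast_eq_zero_iff k (ringChar k) N.card).mp h)
    have hmem : ∀ g : G, g ∈ N ↔ g ∈ N' := fun g => by
      rw [← Finset.mem_coe, hN', SetLike.mem_coe]
    constructor
    · rw [Finset.sum_congr rfl hval, Finset.sum_const, nsmul_eq_mul]
      exact mul_inv_cancel₀ hcard
    · intro a b
      by_cases hb : b ∈ N
      · rw [if_pos hb]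
        have hiff : a ∈ N ↔ a * b⁻¹ ∈ N := by
          rw [hmem a, hmem (a * b⁻¹)]
          exact (mul_mem_cancel_right (inv_mem ((hmem b).mp hb))).symm
        by_cases ha : a ∈ N
        · rw [if_pos ha, if_pos (hiff.mp ha), hval a ha, hval _ (hiff.mp ha), hval b hb,
            mul_comm]
          rw [if_pos hb]
        · rw [if_neg ha, if_neg (fun h => ha (hiff.mpr h)), zero_mul, mul_zero, if_pos hb]
      · rw [if_neg hb, if_neg hb, mul_zero]
end
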